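/- arXiv:0912.2379 — 7 statements merged into one kernel-verified Lean document; each statement's English description precedes it below -/
import Mathlib

section
/- For a function f of bounded variation on a bounded interval I and a subinterval J of I with positive length, the supremum of |f| over J is at most the total variation of f on J plus (1/length(J)) times the integral of |f| over J. -/
open MeasureTheory Set

/-- for `f` of bounded variation on a bounded interval `I` and a
subinterval `J ⊆ I` of positive length, `sup_J |f| ≤ var_J f + (1/m(J)) ∫_J |f|`. -/
theorem sup_le_var_add_mean (f : ℝ → ℝ) (a b c d : ℝ) (I J : Set ℝ)
    (hI : I = Icc a b) (hJ : J = Icc c d) (hJI : J ⊆ I)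
    (hm : 0 < (volume J).toReal)
    (hf : BoundedVariationOn f J) :
    ∀ x ∈ J, |f x| ≤ (eVariationOn f J).toReal
      + (1 / (volume J).toReal) * ∫ y in J, |f y| := by
  intro x hx
  set V := (eVariationOn f J).toReal with hV
  set m := (volume J).toReal with hmdef
  -- integrability of |f| on J
  obtain ⟨p, q, hp, hq, hpq⟩ :=
    hf.locallyBoundedVariationOn.exists_monotoneOn_sub_monotoneOn
  have hcomp : IsCompact J := hJ ▸ isCompact_Icc
  have hmeas : MeasurableSet J := hJ ▸ measurableSet_Icc
  have hint : IntegrableOn f J := by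
    have h1 := hp.integrableOn_isCompact (μ := volume) hcomp
    have h2 := hq.integrableOn_isCompact (μ := volume) hcomp
    exact hpq ▸ (h1.sub h2)
  have hintabs : IntegrableOn (fun y => |f y|) J := hint.abs
  -- pointwise bound : |f x| - V ≤ |f y|
  have key : ∀ y ∈ J, |f x| - V ≤ |f y| := by
    intro y hy
    have hd : dist (f x) (f y) ≤ V := hf.dist_le hx hy
    have := abs_sub_abs_le_abs_sub (f x) (f y)
    rw [Real.dist_eq] at hd
    linarith
  -- integrate
  have hconst : ∫ _ in J, (|f x| - V) = (|f x| - V) * m := by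
    rw [setIntegral_const, smul_eq_mul, mul_comm]
    rfl
  have hmono : (|f x| - V) * m ≤ ∫ y in J, |f y| := by
    rw [← hconst]
    exact setIntegral_mono_on (integrableOn_const (s := J) (μ := volume) (by rw [hJ]; exact measure_Icc_lt_top.ne))
      hintabs hmeas key
  have h2 : |f x| - V ≤ (∫ y in J, |f y|) / m := (le_div_iff₀ hm).2 hmono
  rw [div_mul_eq_mul_div, one_mul]
  linarith
end

section
/- If f is of bounded variation on an interval J and g is C¹ on J, then var_J(fg) ≤ var_J f · sup_J|g| + sup_J|g'| · ∫_J |f(x)| dx. -/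
open MeasureTheory Set

private lemma evar_split (F : ℝ → ℝ) (t : ℕ → ℝ) (ht : Monotone t) (N : ℕ) :
    eVariationOn F (Icc (t 0) (t N)) =
      ∑ k ∈ Finset.range N, eVariationOn F (Icc (t k) (t (k + 1))) := by
  induction N with
  | zero =>
    rw [Finset.range_zero, Finset.sum_empty, Icc_self]
    exact eVariationOn.subsingleton F subsingleton_singleton
  | succ n ih =>
    rw [Finset.sum_range_succ, ← ih]
    have h1 : t 0 ≤ t n := ht (Nat.zero_le n)
    have h2 : t n ≤ t (n + 1) := ht (Nat.le_succ n)
    have key := eVariationOn.Icc_add_Icc F (s := Icc (t 0) (t (n + 1))) h1 h2 ⟨h1, h2⟩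
    rw [inter_eq_self_of_subset_right (Icc_subset_Icc le_rfl h2),
        inter_eq_self_of_subset_right (Icc_subset_Icc h1 le_rfl),
        inter_eq_self_of_subset_right (Icc_subset_Icc le_rfl le_rfl)] at key
    exact key.symm

private lemma piece_bound {a b : ℝ} (f g : ℝ → ℝ) {Mg Mg' : ℝ}
    (hf : BoundedVariationOn f (Icc a b))
    (hfi : IntegrableOn f (Icc a b))
    (hMg : ∀ x ∈ Icc a b, |g x| ≤ Mg)
    (hMg0 : 0 ≤ Mg) (hMg'0 : 0 ≤ Mg')
    (hgl : ∀ x ∈ Icc a b, ∀ y ∈ Icc a b, |g y - g x| ≤ Mg' * |y - x|)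
    {c d : ℝ} (hac : a ≤ c) (hcd : c ≤ d) (hdb : d ≤ b) :
    eVariationOn (fun x => f x * g x) (Icc c d) ≤
      eVariationOn f (Icc c d) * ENNReal.ofReal Mg
        + ENNReal.ofReal (Mg' * ∫ x in Icc c d, |f x|)
        + eVariationOn f (Icc c d) * ENNReal.ofReal (Mg' * (d - c)) := by
  rcases eq_or_lt_of_le hcd with rfl | hlt
  · rw [Icc_self, eVariationOn.subsingleton _ subsingleton_singleton]
    exact zero_le
  have hsub : Icc c d ⊆ Icc a b := Icc_subset_Icc hac hdb
  set V := eVariationOn f (Icc c d) with hV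
  have hVtop : V ≠ ⊤ := hf.mono hsub
  set Vr := V.toReal with hVrdef
  have hVr : 0 ≤ Vr := ENNReal.toReal_nonneg
  set I := ∫ x in Icc c d, |f x| with hIdef
  have hI0 : 0 ≤ I := integral_nonneg fun x => abs_nonneg _
  have hfi' : IntegrableOn (fun x => |f x|) (Icc c d) := (hfi.mono_set hsub).abs
  have hdc0 : (0:ℝ) < d - c := by linarith
  -- pointwise bound |f x| ≤ |f t| + Vr
  have hpt : ∀ x ∈ Icc c d, ∀ t ∈ Icc c d, |f x| ≤ |f t| + Vr := by
    intro x hx t ht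
    have h1 : edist (f x) (f t) ≤ V := eVariationOn.edist_le f hx ht
    have h2 : |f x - f t| ≤ Vr := by
      have h3 := ENNReal.toReal_mono hVtop h1
      rwa [edist_dist, ENNReal.toReal_ofReal dist_nonneg, Real.dist_eq] at h3
    have h4 := abs_sub_abs_le_abs_sub (f x) (f t)
    linarith
  -- integrated bound
  have key : ∀ x ∈ Icc c d, |f x| * (d - c) ≤ I + Vr * (d - c) := by
    intro x hx
    have hconst : IntegrableOn (fun _ : ℝ => |f x|) (Icc c d) :=
      integrableOn_const measure_Icc_lt_top.ne
    have hconst2 : IntegrableOn (fun _ : ℝ => Vr) (Icc c d) :=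
      integrableOn_const measure_Icc_lt_top.ne
    have hmono : (∫ t in Icc c d, |f x|) ≤ ∫ t in Icc c d, (|f t| + Vr) :=
      setIntegral_mono_on hconst (by exact hfi'.add hconst2) measurableSet_Icc
        (fun t ht => hpt x hx t ht)
    rw [setIntegral_const, integral_add hfi' hconst2, setIntegral_const] at hmono
    rw [Real.volume_real_Icc_of_le hcd, smul_eq_mul] at hmono
    have : (d - c) * |f x| ≤ I + (d - c) * Vr := by simpa [hIdef] using hmono
    linarith
  set A := (I + Vr * (d - c)) / (d - c) with hAdef
  have hA : ∀ x ∈ Icc c d, |f x| ≤ A := fun x hx =>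
    (le_div_iff₀ hdc0).mpr (key x hx)
  have hA0 : 0 ≤ A := le_trans (abs_nonneg (f c)) (hA c ⟨le_rfl, hcd⟩)
  have hAd : A * (d - c) = I + Vr * (d - c) := div_mul_cancel₀ _ (ne_of_gt hdc0)
  -- bound each partition sum
  refine iSup_le ?_
  rintro ⟨n, ⟨u, hu, us⟩⟩
  dsimp only
  have husub : ∀ i, u i ∈ Icc a b := fun i => hsub (us i)
  have hsum1 : ∑ i ∈ Finset.range n, |f (u (i + 1)) - f (u i)| ≤ Vr := by
    have h1 := eVariationOn.sum_le (f := f) (n := n) hu us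
    have h2 : ∑ i ∈ Finset.range n, edist (f (u (i + 1))) (f (u i)) =
        ENNReal.ofReal (∑ i ∈ Finset.range n, |f (u (i + 1)) - f (u i)|) := by
      rw [ENNReal.ofReal_sum_of_nonneg (fun i _ => abs_nonneg _)]
      exact Finset.sum_congr rfl fun i _ => by rw [edist_dist, Real.dist_eq]
    rw [h2] at h1
    have h3 := ENNReal.toReal_mono hVtop h1
    rwa [ENNReal.toReal_ofReal (Finset.sum_nonneg fun i _ => abs_nonneg _)] at h3
  have hptw : ∀ i, |f (u (i + 1)) * g (u (i + 1)) - f (u i) * g (u i)| ≤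
      Mg * |f (u (i + 1)) - f (u i)| + Mg' * A * (u (i + 1) - u i) := by
    intro i
    have hxy : u i ≤ u (i + 1) := hu (Nat.le_succ i)
    have hdec : f (u (i + 1)) * g (u (i + 1)) - f (u i) * g (u i) =
        (f (u (i + 1)) - f (u i)) * g (u (i + 1)) + f (u i) * (g (u (i + 1)) - g (u i)) := by
      ring
    have h1 : |f (u (i + 1)) * g (u (i + 1)) - f (u i) * g (u i)| ≤
        |f (u (i + 1)) - f (u i)| * |g (u (i + 1))| + |f (u i)| * |g (u (i + 1)) - g (u i)| := by
      rw [hdec]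
      calc _ ≤ |(f (u (i + 1)) - f (u i)) * g (u (i + 1))| +
            |f (u i) * (g (u (i + 1)) - g (u i))| := abs_add_le _ _
        _ = _ := by rw [abs_mul, abs_mul]
    have h2 : |g (u (i + 1))| ≤ Mg := hMg _ (husub (i + 1))
    have h3 : |g (u (i + 1)) - g (u i)| ≤ Mg' * (u (i + 1) - u i) := by
      have := hgl (u i) (husub i) (u (i + 1)) (husub (i + 1))
      rwa [abs_of_nonneg (sub_nonneg.mpr hxy)] at this
    have h4 : |f (u i)| ≤ A := hA _ (us i)
    have h5 : |f (u (i + 1)) - f (u i)| * |g (u (i + 1))| ≤ |f (u (i + 1)) - f (u i)| * Mg :=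
      mul_le_mul_of_nonneg_left h2 (abs_nonneg _)
    have h6 : |f (u i)| * |g (u (i + 1)) - g (u i)| ≤ A * (Mg' * (u (i + 1) - u i)) := by
      apply mul_le_mul h4 h3 (abs_nonneg _) hA0
    calc |f (u (i + 1)) * g (u (i + 1)) - f (u i) * g (u i)|
        ≤ |f (u (i + 1)) - f (u i)| * |g (u (i + 1))|
          + |f (u i)| * |g (u (i + 1)) - g (u i)| := h1
      _ ≤ |f (u (i + 1)) - f (u i)| * Mg + A * (Mg' * (u (i + 1) - u i)) := add_le_add h5 h6
      _ = Mg * |f (u (i + 1)) - f (u i)| + Mg' * A * (u (i + 1) - u i) := by ring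
  have hreal : ∑ i ∈ Finset.range n, |f (u (i + 1)) * g (u (i + 1)) - f (u i) * g (u i)| ≤
      Mg * Vr + Mg' * A * (d - c) := by
    calc ∑ i ∈ Finset.range n, |f (u (i + 1)) * g (u (i + 1)) - f (u i) * g (u i)|
        ≤ ∑ i ∈ Finset.range n,
            (Mg * |f (u (i + 1)) - f (u i)| + Mg' * A * (u (i + 1) - u i)) :=
          Finset.sum_le_sum fun i _ => hptw i
      _ = Mg * (∑ i ∈ Finset.range n, |f (u (i + 1)) - f (u i)|) + Mg' * A * (u n - u 0) := by
          rw [Finset.sum_add_distrib, ← Finset.mul_sum, ← Finset.mul_sum,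
            Finset.sum_range_sub (fun i => u i)]
      _ ≤ Mg * Vr + Mg' * A * (d - c) := by
          have h7 : u n - u 0 ≤ d - c := by
            have := (us n).2; have := (us 0).1; linarith
          have h8 : 0 ≤ Mg' * A := mul_nonneg hMg'0 hA0
          have h9 := mul_le_mul_of_nonneg_left hsum1 hMg0
          have h10 := mul_le_mul_of_nonneg_left h7 h8
          linarith
  have hfinal : Mg * Vr + Mg' * A * (d - c) = Vr * Mg + (Mg' * I + Vr * (Mg' * (d - c))) := by
    have : Mg' * A * (d - c) = Mg' * (A * (d - c)) := by ring
    rw [this, hAd]; ring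
  calc ∑ i ∈ Finset.range n, edist (f (u (i + 1)) * g (u (i + 1))) (f (u i) * g (u i))
      = ENNReal.ofReal (∑ i ∈ Finset.range n,
          |f (u (i + 1)) * g (u (i + 1)) - f (u i) * g (u i)|) := by
        rw [ENNReal.ofReal_sum_of_nonneg (fun i _ => abs_nonneg _)]
        exact Finset.sum_congr rfl fun i _ => by rw [edist_dist, Real.dist_eq]
    _ ≤ ENNReal.ofReal (Vr * Mg + (Mg' * I + Vr * (Mg' * (d - c)))) := by
        apply ENNReal.ofReal_le_ofReal; rw [← hfinal]; exact hreal
    _ = ENNReal.ofReal (Vr * Mg) + ENNReal.ofReal (Mg' * I)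
          + ENNReal.ofReal (Vr * (Mg' * (d - c))) := by
        rw [ENNReal.ofReal_add (by positivity) (by positivity),
          ENNReal.ofReal_add (by positivity) (by positivity), add_assoc]
    _ = V * ENNReal.ofReal Mg + ENNReal.ofReal (Mg' * I)
          + V * ENNReal.ofReal (Mg' * (d - c)) := by
        rw [ENNReal.ofReal_mul hVr, ENNReal.ofReal_mul hVr, ENNReal.ofReal_toReal hVtop]

/-- if `f` is of bounded variation and integrable on `J = [a,b]` and `g` is `C¹`
on `J`, then `var_J (fg) ≤ var_J f · sup_J |g| + sup_J |g'| · ∫_J |f|`. -/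
theorem var_mul_C1_le (a b : ℝ) (f g g' : ℝ → ℝ)
    (hf : BoundedVariationOn f (Icc a b))
    (hfi : IntegrableOn f (Icc a b))
    (hg : ∀ x ∈ Icc a b, HasDerivWithinAt g (g' x) (Icc a b) x)
    (hg'c : ContinuousOn g' (Icc a b))
    (Mg Mg' : ℝ) (hMg : ∀ x ∈ Icc a b, |g x| ≤ Mg)
    (hMg' : ∀ x ∈ Icc a b, |g' x| ≤ Mg') :
    eVariationOn (fun x => f x * g x) (Icc a b) ≤
      eVariationOn f (Icc a b) * ENNReal.ofReal Mg
        + ENNReal.ofReal (Mg' * ∫ x in Icc a b, |f x|) := by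
  rcases le_or_gt b a with hba | hab
  · rw [eVariationOn.subsingleton _ (Set.subsingleton_Icc_of_ge hba)]
    exact zero_le
  have hab' : a ≤ b := hab.le
  have hane : a ∈ Icc a b := ⟨le_rfl, hab'⟩
  have hMg0 : 0 ≤ Mg := (abs_nonneg _).trans (hMg a hane)
  have hMg'0 : 0 ≤ Mg' := (abs_nonneg _).trans (hMg' a hane)
  have hgl : ∀ x ∈ Icc a b, ∀ y ∈ Icc a b, |g y - g x| ≤ Mg' * |y - x| := by
    intro x hx y hy
    have := (convex_Icc a b).norm_image_sub_le_of_norm_hasDerivWithin_le hg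
      (fun t ht => by rw [Real.norm_eq_abs]; exact hMg' t ht) hx hy
    simpa [Real.norm_eq_abs] using this
  refine ENNReal.le_of_forall_pos_le_add fun ε hε _ => ?_
  set V := eVariationOn f (Icc a b) with hVdef
  have hVtop : V ≠ ⊤ := hf
  set Vr := V.toReal with hVrdef
  have hVr : 0 ≤ Vr := ENNReal.toReal_nonneg
  have hε' : (0:ℝ) < ε := hε
  obtain ⟨N, hN⟩ := exists_nat_gt (max 1 (Mg' * Vr * (b - a) / ε))
  have hN1 : 1 ≤ (N : ℝ) := le_of_lt (lt_of_le_of_lt (le_max_left _ _) hN)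
  have hNpos : 0 < (N : ℝ) := by linarith
  set h := (b - a) / N with hhdef
  have hh0 : 0 ≤ h := div_nonneg (by linarith) hNpos.le
  set t : ℕ → ℝ := fun k => a + k * h with htdef
  have ht : Monotone t := by
    intro i j hij
    have : (i : ℝ) ≤ j := Nat.cast_le.mpr hij
    simp only [htdef]
    nlinarith
  have ht0 : t 0 = a := by simp [htdef]
  have htN : t N = b := by
    simp only [htdef, hhdef]
    field_simp
    ring
  have htstep : ∀ k : ℕ, t (k + 1) - t k = h := by
    intro k
    simp only [htdef]
    push_cast
    ring
  have htmem : ∀ k ≤ N, t k ∈ Icc a b := by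
    intro k hk
    constructor
    · rw [← ht0]; exact ht (Nat.zero_le k)
    · rw [← htN]; exact ht hk
  -- split the variation of f * g
  have splitF := evar_split (fun x => f x * g x) t ht N
  rw [ht0, htN] at splitF
  have splitf := evar_split f t ht N
  rw [ht0, htN] at splitf
  -- split the integral
  have hmem' : ∀ k < N, Icc (t k) (t (k + 1)) ⊆ Icc a b := fun k hk =>
    Icc_subset_Icc (htmem k hk.le).1 (htmem (k + 1) hk).2
  have hintk : ∀ k < N, IntervalIntegrable (fun x => |f x|) volume (t k) (t (k + 1)) := by
    intro k hk
    apply IntegrableOn.intervalIntegrable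
    rw [uIcc_of_le (ht (Nat.le_succ k))]
    exact IntegrableOn.mono_set hfi.abs (hmem' k hk)
  have splitI : ∫ x in Icc a b, |f x| =
      ∑ k ∈ Finset.range N, ∫ x in Icc (t k) (t (k + 1)), |f x| := by
    have h1 := intervalIntegral.sum_integral_adjacent_intervals (a := t) (μ := volume) hintk
    have h2 : ∀ k : ℕ, (∫ x in Icc (t k) (t (k + 1)), |f x|) =
        ∫ x in (t k)..(t (k + 1)), |f x| := by
      intro k
      rw [intervalIntegral.integral_of_le (ht (Nat.le_succ k)), integral_Icc_eq_integral_Ioc]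
    calc ∫ x in Icc a b, |f x| = ∫ x in (t 0)..(t N), |f x| := by
          rw [ht0, htN] at h1 ⊢
          rw [intervalIntegral.integral_of_le hab', integral_Icc_eq_integral_Ioc]
      _ = ∑ k ∈ Finset.range N, ∫ x in (t k)..(t (k + 1)), |f x| := h1.symm
      _ = ∑ k ∈ Finset.range N, ∫ x in Icc (t k) (t (k + 1)), |f x| :=
          Finset.sum_congr rfl fun k _ => (h2 k).symm
  calc eVariationOn (fun x => f x * g x) (Icc a b)
      = ∑ k ∈ Finset.range N, eVariationOn (fun x => f x * g x) (Icc (t k) (t (k + 1))) :=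
        splitF
    _ ≤ ∑ k ∈ Finset.range N, (eVariationOn f (Icc (t k) (t (k + 1))) * ENNReal.ofReal Mg
          + ENNReal.ofReal (Mg' * ∫ x in Icc (t k) (t (k + 1)), |f x|)
          + eVariationOn f (Icc (t k) (t (k + 1))) * ENNReal.ofReal (Mg' * h)) := by
        apply Finset.sum_le_sum
        intro k hk
        have hk' := Finset.mem_range.mp hk
        have hb := piece_bound f g hf hfi hMg hMg0 hMg'0 hgl
          (htmem k hk'.le).1 (ht (Nat.le_succ k)) (htmem (k + 1) hk').2
        rwa [htstep k] at hb
    _ = (∑ k ∈ Finset.range N, eVariationOn f (Icc (t k) (t (k + 1)))) * ENNReal.ofReal Mg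
          + ENNReal.ofReal (Mg' * ∑ k ∈ Finset.range N, ∫ x in Icc (t k) (t (k + 1)), |f x|)
          + (∑ k ∈ Finset.range N, eVariationOn f (Icc (t k) (t (k + 1))))
            * ENNReal.ofReal (Mg' * h) := by
        rw [Finset.sum_add_distrib, Finset.sum_add_distrib, ← Finset.sum_mul, ← Finset.sum_mul]
        congr 1
        congr 1
        rw [Finset.mul_sum, ENNReal.ofReal_sum_of_nonneg]
        intro i _
        exact mul_nonneg hMg'0 (integral_nonneg fun x => abs_nonneg _)
    _ = V * ENNReal.ofReal Mg + ENNReal.ofReal (Mg' * ∫ x in Icc a b, |f x|)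
          + V * ENNReal.ofReal (Mg' * h) := by
        rw [← splitf, ← splitI]
    _ ≤ V * ENNReal.ofReal Mg + ENNReal.ofReal (Mg' * ∫ x in Icc a b, |f x|) + ↑ε := by
        refine add_le_add_right ?_ _
        have h1 : Mg' * Vr * (b - a) / ε < N := lt_of_le_of_lt (le_max_right _ _) hN
        have h2 : Mg' * Vr * (b - a) < N * ε := by
          rwa [div_lt_iff₀ hε'] at h1
          -- note: goal order
        have hlt : Vr * (Mg' * h) < ε := by
          have heq : Vr * (Mg' * h) = Mg' * Vr * (b - a) / N := by
            rw [hhdef]; ring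
          rw [heq, div_lt_iff₀ hNpos]
          linarith
        calc V * ENNReal.ofReal (Mg' * h) = ENNReal.ofReal (Vr * (Mg' * h)) := by
              rw [ENNReal.ofReal_mul hVr, ENNReal.ofReal_toReal hVtop]
          _ ≤ ENNReal.ofReal ((ε : ℝ)) := ENNReal.ofReal_le_ofReal hlt.le
          _ = ↑ε := ENNReal.ofReal_coe_nnreal
end

section
/- For f of bounded variation on an interval I and J ⊆ I a subinterval, the variation of f·χ_J (f times the indicator of J) on I is at most var_J f + 2·sup_J |f|. -/
open MeasureTheory Set

private lemma evar_le_top_jump {h : ℝ → ℝ} {s : Set ℝ} {c : ℝ}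
    (hs : ∀ x ∈ s, x ≤ c) (h0 : ∀ x ∈ s, x ≠ c → h x = 0) :
    eVariationOn h s ≤ edist (h c) 0 := by
  classical
  apply iSup_le
  rintro ⟨n, u, hu, us⟩
  set B := edist (h c) 0 with hB
  have key : ∀ i, edist (h (u (i + 1))) (h (u i)) ≤
      if u i ≠ c ∧ u (i + 1) = c then B else 0 := by
    intro i
    by_cases h1 : u (i + 1) = c
    · by_cases h2 : u i = c
      · simp [h1, h2]
      · rw [if_pos ⟨h2, h1⟩, h1, h0 (u i) (us i) h2]
    · have h2 : u i ≠ c := by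
        intro h2
        exact h1 (le_antisymm (hs _ (us (i + 1))) (h2 ▸ hu (Nat.le_succ i)))
      rw [h0 _ (us (i + 1)) h1, h0 _ (us i) h2]
      simp [h1]
  calc ∑ i ∈ Finset.range n, edist (h (u (i + 1))) (h (u i))
      ≤ ∑ i ∈ Finset.range n, (if u i ≠ c ∧ u (i + 1) = c then B else 0) :=
        Finset.sum_le_sum fun i _ => key i
    _ = ∑ i ∈ (Finset.range n).filter (fun i => u i ≠ c ∧ u (i + 1) = c), B :=
        (Finset.sum_filter _ _).symm
    _ = ((Finset.range n).filter (fun i => u i ≠ c ∧ u (i + 1) = c)).card • B :=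
        Finset.sum_const B
    _ ≤ 1 * B := by
        rw [nsmul_eq_mul]
        apply mul_le_mul_left
        rw [show (1 : ENNReal) = ((1 : ℕ) : ENNReal) by simp]
        exact Nat.cast_le.mpr (Finset.card_le_one.mpr (by
          rintro i hi j hj
          simp only [Finset.mem_filter] at hi hj
          by_contra hij
          rcases Nat.lt_or_ge i j with hlt | hge
          · exact hj.2.1 (le_antisymm (hs _ (us j))
              (hi.2.2 ▸ hu (Nat.succ_le_of_lt hlt)))
          · have hlt : j < i := lt_of_le_of_ne hge (fun e => hij e.symm)
            exact hi.2.1 (le_antisymm (hs _ (us i))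
              (hj.2.2 ▸ hu (Nat.succ_le_of_lt hlt)))))
    _ = B := one_mul B

private lemma evar_le_bot_jump {h : ℝ → ℝ} {s : Set ℝ} {c : ℝ}
    (hs : ∀ x ∈ s, c ≤ x) (h0 : ∀ x ∈ s, x ≠ c → h x = 0) :
    eVariationOn h s ≤ edist (h c) 0 := by
  classical
  apply iSup_le
  rintro ⟨n, u, hu, us⟩
  set B := edist (h c) 0 with hB
  have key : ∀ i, edist (h (u (i + 1))) (h (u i)) ≤
      if u i = c ∧ u (i + 1) ≠ c then B else 0 := by
    intro i
    by_cases h1 : u i = c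
    · by_cases h2 : u (i + 1) = c
      · simp [h1, h2]
      · rw [if_pos ⟨h1, h2⟩, h1, h0 (u (i + 1)) (us (i + 1)) h2, edist_comm]
    · have h2 : u (i + 1) ≠ c := by
        intro h2
        exact h1 (le_antisymm (h2 ▸ hu (Nat.le_succ i)) (hs _ (us i)))
      rw [h0 _ (us (i + 1)) h2, h0 _ (us i) h1]
      simp [h1]
  calc ∑ i ∈ Finset.range n, edist (h (u (i + 1))) (h (u i))
      ≤ ∑ i ∈ Finset.range n, (if u i = c ∧ u (i + 1) ≠ c then B else 0) :=
        Finset.sum_le_sum fun i _ => key i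
    _ = ∑ i ∈ (Finset.range n).filter (fun i => u i = c ∧ u (i + 1) ≠ c), B :=
        (Finset.sum_filter _ _).symm
    _ = ((Finset.range n).filter (fun i => u i = c ∧ u (i + 1) ≠ c)).card • B :=
        Finset.sum_const B
    _ ≤ 1 * B := by
        rw [nsmul_eq_mul]
        apply mul_le_mul_left
        rw [show (1 : ENNReal) = ((1 : ℕ) : ENNReal) by simp]
        exact Nat.cast_le.mpr (Finset.card_le_one.mpr (by
          rintro i hi j hj
          simp only [Finset.mem_filter] at hi hj
          by_contra hij
          rcases Nat.lt_or_ge i j with hlt | hge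
          · have h1 : c < u (i + 1) :=
              lt_of_le_of_ne (hs _ (us (i + 1))) (Ne.symm hi.2.2)
            exact absurd hj.2.1 (ne_of_gt (lt_of_lt_of_le h1 (hu (Nat.succ_le_of_lt hlt))))
          · have hlt : j < i := lt_of_le_of_ne hge (fun e => hij e.symm)
            have h1 : c < u (j + 1) :=
              lt_of_le_of_ne (hs _ (us (j + 1))) (Ne.symm hj.2.2)
            exact absurd hi.2.1 (ne_of_gt (lt_of_lt_of_le h1 (hu (Nat.succ_le_of_lt hlt))))))
    _ = B := one_mul B

/-- for `f` of bounded variation on `I` and `J ⊆ I` a subinterval,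
`var_I (f·χ_J) ≤ var_J f + 2 sup_J |f|`. -/
theorem var_indicator_le (a b c d : ℝ) (f : ℝ → ℝ) (J : Set ℝ) (hJ : J = Icc c d)
    (hJI : J ⊆ Icc a b) (hf : BoundedVariationOn f (Icc a b))
    (M : ℝ) (hM : ∀ x ∈ J, |f x| ≤ M) :
    eVariationOn (J.indicator f) (Icc a b) ≤
      eVariationOn f J + ENNReal.ofReal (2 * M) := by
  by_cases hcd : c ≤ d
  · -- J is nonempty
    have hcJ : c ∈ J := by rw [hJ]; exact left_mem_Icc.mpr hcd
    have hdJ : d ∈ J := by rw [hJ]; exact right_mem_Icc.mpr hcd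
    have hc : c ∈ Icc a b := hJI hcJ
    have hd : d ∈ Icc a b := hJI hdJ
    have hM0 : 0 ≤ M := le_trans (abs_nonneg _) (hM c hcJ)
    set g := J.indicator f with hg
    have hab : a ≤ b := le_trans hc.1 hc.2
    have e0 : Icc a b ∩ Icc a b = Icc a b := inter_self _
    have e1 : Icc a b ∩ Icc a c = Icc a c :=
      inter_eq_self_of_subset_right (Icc_subset_Icc le_rfl hc.2)
    have e2 : Icc a b ∩ Icc c b = Icc c b :=
      inter_eq_self_of_subset_right (Icc_subset_Icc hc.1 le_rfl)
    have e3 : Icc a b ∩ Icc c d = Icc c d :=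
      inter_eq_self_of_subset_right (hJ ▸ hJI)
    have e4 : Icc a b ∩ Icc d b = Icc d b :=
      inter_eq_self_of_subset_right (Icc_subset_Icc hd.1 le_rfl)
    have split1 := eVariationOn.Icc_add_Icc g hc.1 hc.2 hc
    have split2 := eVariationOn.Icc_add_Icc g hcd hd.2 hd
    rw [e0, e1, e2] at split1
    rw [e2, e3, e4] at split2
    -- bound on [a,c]
    have bA : eVariationOn g (Icc a c) ≤ ENNReal.ofReal M := by
      refine le_trans (evar_le_top_jump (fun x hx => hx.2) ?_) ?_
      · intro x hx hxc
        apply indicator_of_notMem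
        rw [hJ]
        intro hmem
        exact hxc (le_antisymm hx.2 hmem.1)
      · rw [hg, indicator_of_mem hcJ, edist_dist, Real.dist_0_eq_abs]
        exact ENNReal.ofReal_le_ofReal (hM c hcJ)
    -- bound on [d,b]
    have bB : eVariationOn g (Icc d b) ≤ ENNReal.ofReal M := by
      refine le_trans (evar_le_bot_jump (fun x hx => hx.1) ?_) ?_
      · intro x hx hxd
        apply indicator_of_notMem
        rw [hJ]
        intro hmem
        exact hxd (le_antisymm hmem.2 hx.1)
      · rw [hg, indicator_of_mem hdJ, edist_dist, Real.dist_0_eq_abs]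
        exact ENNReal.ofReal_le_ofReal (hM d hdJ)
    -- equality in the middle
    have bM : eVariationOn g (Icc c d) = eVariationOn f J := by
      rw [← hJ]
      exact eVariationOn.eq_of_eqOn (fun x hx => indicator_of_mem hx f)
    calc eVariationOn g (Icc a b)
        = eVariationOn g (Icc a c) + (eVariationOn g (Icc c d)
            + eVariationOn g (Icc d b)) := by rw [split2, split1]
      _ ≤ ENNReal.ofReal M + (eVariationOn f J + ENNReal.ofReal M) := by
          rw [bM]
          exact add_le_add bA (add_le_add le_rfl bB)
      _ = eVariationOn f J + ENNReal.ofReal (2 * M) := by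
          rw [two_mul, ENNReal.ofReal_add hM0 hM0]
          ring
  · -- J is empty
    have hJe : J = ∅ := by rw [hJ]; exact Icc_eq_empty hcd
    rw [hJe, indicator_empty]
    have : eVariationOn (fun _ : ℝ => (0 : ℝ)) (Icc a b) = 0 := by
      apply eVariationOn.constant_on
      rintro x ⟨_, _, rfl⟩ y ⟨_, _, rfl⟩
      rfl
    rw [this]
    exact zero_le
end

section
/- For every α ∈ (0,1) and every n ≥ 1, the derivative of g_{n,α}(x) = 1/|(T_α^n)'(x)| on the interior of each cylinder of 𝒫_n satisfies |g_{n,α}'(x)| ≤ 2/(1 − γ_α), where γ_α = max{α², (α−1)²}. -/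
open Set Topology Filter

/-- Nakada's α-continued fraction map on `[α-1, α]`. -/
noncomputable def T (α : ℝ) (x : ℝ) : ℝ :=
  if x = 0 then 0 else 1 / |x| - ⌊1 / |x| + 1 - α⌋

lemma T_mem_Icc {α : ℝ} (hα : α ∈ Ioo (0:ℝ) 1) (y : ℝ) : T α y ∈ Icc (α-1) α := by
  obtain ⟨h0, h1⟩ := hα
  unfold T
  split_ifs with h
  · constructor <;> [linarith; linarith]
  · have h1' : (⌊1/|y| + 1 - α⌋ : ℝ) ≤ 1/|y| + 1 - α := Int.floor_le _
    have h2' : 1/|y| + 1 - α < ⌊1/|y| + 1 - α⌋ + 1 := Int.lt_floor_add_one _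
    constructor <;> [linarith; linarith]

lemma T_iter_mem_Icc {α : ℝ} (hα : α ∈ Ioo (0:ℝ) 1) {x : ℝ} (hx : x ∈ Icc (α-1) α) (j : ℕ) :
    (T α)^[j] x ∈ Icc (α-1) α := by
  induction j with
  | zero => exact hx
  | succ j ih => rw [Function.iterate_succ_apply']; exact T_mem_Icc hα _

lemma abs_le_s {α : ℝ} {y : ℝ} (hy : y ∈ Icc (α-1) α) : |y| ≤ max α (1-α) := by
  rw [abs_le]
  constructor
  · have := hy.1; have : -(1-α) ≤ y := by linarith
    exact le_trans (neg_le_neg (le_max_right α (1-α))) this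
  · exact le_trans hy.2 (le_max_left _ _)

set_option maxHeartbeats 1000000 in
lemma branch_package {α : ℝ} (hα : α ∈ Ioo (0:ℝ) 1) (x : ℝ) (hx : x ∈ Icc (α-1) α)
    (hgood : ∀ j : ℕ, (T α)^[j] x ≠ 0 ∧ ∀ m : ℤ, 1/|(T α)^[j] x| + 1 - α ≠ m) (n : ℕ) :
    ∃ (V : Set ℝ) (D E : ℝ → ℝ), IsOpen V ∧ x ∈ V ∧
      (∀ y ∈ V, HasDerivAt ((T α)^[n]) (D y) y) ∧
      (∀ y ∈ V, HasDerivAt D (E y) y) ∧ D x ≠ 0 ∧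
      |E x| ≤ (2 * max α (1-α) / (1 - (max α (1-α))^2)) * (D x)^2 := by
  have hs0 : 0 < max α (1-α) := lt_of_lt_of_le hα.1 (le_max_left _ _)
  have hs1 : max α (1-α) < 1 := max_lt hα.2 (by linarith [hα.1])
  have hγ1 : (max α (1-α))^2 < 1 := by nlinarith
  have hγ0 : 0 < 1 - (max α (1-α))^2 := by linarith
  set s := max α (1-α) with hs
  set K := 2 * s / (1 - s^2) with hK
  have hK0 : 0 ≤ K := by positivity
  induction n with
  | zero =>
      refine ⟨univ, fun _ => 1, fun _ => 0, isOpen_univ, mem_univ x, ?_, ?_, one_ne_zero, ?_⟩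
      · intro y _
        simpa using (hasDerivAt_id y)
      · intro y _; exact hasDerivAt_const y (1:ℝ)
      · simpa using mul_nonneg hK0 (by positivity : (0:ℝ) ≤ (1:ℝ)^2)
  | succ n ih =>
      obtain ⟨V, D, E, hV, hxV, hDT, hED, hDx, hEx⟩ := ih
      set z := (T α)^[n] x with hz
      have hzI : z ∈ Icc (α-1) α := T_iter_mem_Icc hα hx n
      have hz0 : z ≠ 0 := (hgood n).1
      have hzfl : ∀ m : ℤ, 1/|z| + 1 - α ≠ m := (hgood n).2
      have hzs : |z| ≤ s := abs_le_s hzI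
      have hzabs : 0 < |z| := abs_pos.mpr hz0
      -- sign
      obtain ⟨ε, hε2, hεz⟩ : ∃ ε : ℝ, ε^2 = 1 ∧ ε * z = |z| := by
        rcases lt_or_gt_of_ne hz0 with h | h
        · exact ⟨-1, by norm_num, by rw [abs_of_neg h]; ring⟩
        · exact ⟨1, by norm_num, by rw [abs_of_pos h]; ring⟩
      have hεabs : |ε| = 1 := by
        have := abs_pow ε 2 ▸ congrArg abs hε2
        nlinarith [abs_nonneg ε, sq_abs ε]
      have hεne : ε ≠ 0 := by intro h; rw [h] at hε2; norm_num at hε2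
      -- floor data
      set m : ℤ := ⌊1/|z| + 1 - α⌋ with hm
      have hinv1 : 1 ≤ 1/|z| := by
        rw [le_div_iff₀ hzabs]; simpa using le_trans hzs hs1.le
      have hm1 : (1:ℤ) ≤ m := by
        apply Int.le_floor.mpr; push_cast; linarith [hα.2]
      have hmlt : (m:ℝ) < 1/|z| + 1 - α := lt_of_le_of_ne (Int.floor_le _) (Ne.symm (hzfl m))
      have hmgt : 1/|z| + 1 - α < m + 1 := Int.lt_floor_add_one _
      have hma : (0:ℝ) < m + α - 1 := by
        have : (1:ℝ) ≤ m := by exact_mod_cast hm1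
        linarith [hα.1]
      have hma' : (0:ℝ) < m + α := by linarith [hα.1]
      -- the branch domain
      set O : Set ℝ := (fun w => ε * w) ⁻¹' (Ioo (1/((m:ℝ)+α)) (1/((m:ℝ)+α-1))) with hO
      have hOopen : IsOpen O := (isOpen_Ioo).preimage (continuous_const.mul continuous_id)
      have hinvmem : 1/|z| ∈ Ioo ((m:ℝ)+α-1) ((m:ℝ)+α) := ⟨by linarith, by linarith⟩
      have hzO : z ∈ O := by
        have h1 : 1/((m:ℝ)+α) < |z| := (one_div_lt hma' hzabs).mpr hinvmem.2
        have h2 : |z| < 1/((m:ℝ)+α-1) := (lt_one_div hzabs hma).mpr hinvmem.1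
        exact ⟨by simpa [hεz] using h1, by simpa [hεz] using h2⟩
      -- branch formula on O
      have hOne : ∀ w ∈ O, w ≠ 0 ∧ |w| = ε * w ∧ T α w = ε * w⁻¹ - (m:ℝ) := by
        intro w hw
        obtain ⟨hw1, hw2⟩ := hw
        simp only [mem_preimage] at hw1 hw2
        have ht0 : 0 < ε * w := lt_trans (by positivity) hw1
        have hw0 : w ≠ 0 := by rintro rfl; simp at ht0
        have habsw : |w| = ε * w := by
          have : |ε * w| = ε * w := abs_of_pos ht0
          rwa [abs_mul, hεabs, one_mul] at this
        have hiw : (m:ℝ) + α - 1 < 1/|w| ∧ 1/|w| < (m:ℝ) + α := by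
          rw [habsw]
          constructor
          · exact (lt_one_div hma ht0).mpr hw2
          · exact (one_div_lt ht0 hma').mpr hw1
        have hfl : ⌊1/|w| + 1 - α⌋ = m := by
          rw [Int.floor_eq_iff]
          refine ⟨by linarith [hiw.1], by push_cast; linarith [hiw.2]⟩
        have hTw : T α w = 1/|w| - (m:ℝ) := by
          rw [T, if_neg hw0, hfl]
        refine ⟨hw0, habsw, ?_⟩
        rw [hTw, habsw]
        have hεinv : ε⁻¹ = ε := by
          field_simp
          nlinarith [hε2]
        rw [one_div, mul_inv, hεinv]
      -- new neighbourhood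
      have hTcont : ContinuousOn ((T α)^[n]) V := fun y hy =>
        ((hDT y hy).differentiableAt).continuousAt.continuousWithinAt
      set V' : Set ℝ := V ∩ ((T α)^[n]) ⁻¹' O with hV'
      have hV'open : IsOpen V' := hTcont.isOpen_inter_preimage hV hOopen
      have hxV' : x ∈ V' := ⟨hxV, hzO⟩
      set D' : ℝ → ℝ := fun y => ε * (-(D y) / ((T α)^[n] y)^2) with hD'
      set E' : ℝ → ℝ := fun y => ε * ((-(E y) * ((T α)^[n] y)^2 - -(D y) * (2 * ((T α)^[n] y)^1 * D y)) / (((T α)^[n] y)^2)^2) with hE'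
      have hDT' : ∀ y ∈ V', HasDerivAt ((T α)^[n+1]) (D' y) y := by
        intro y hy
        have hT := hDT y hy.1
        have hne : ((T α)^[n]) y ≠ 0 := (hOne _ hy.2).1
        have hb : HasDerivAt (fun w => ε * (((T α)^[n]) w)⁻¹ - (m:ℝ)) (D' y) y := by
          simpa [hD', mul_div_assoc] using ((hT.inv hne).const_mul ε).sub_const (m:ℝ)
        apply hb.congr_of_eventuallyEq
        filter_upwards [hV'open.mem_nhds hy] with w hw
        rw [Function.iterate_succ_apply']
        exact (hOne _ hw.2).2.2
      have hED' : ∀ y ∈ V', HasDerivAt D' (E' y) y := by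
        intro y hy
        have hT := hDT y hy.1
        have hE := hED y hy.1
        have hne : ((T α)^[n]) y ≠ 0 := (hOne _ hy.2).1
        have h2 : HasDerivAt (fun w => (((T α)^[n]) w)^2) (2 * (((T α)^[n]) y)^1 * D y) y := by
          simpa using hT.fun_pow 2
        have h3 := (hE.neg.div h2 (pow_ne_zero 2 hne)).const_mul ε
        simpa [hD', hE'] using h3
      -- estimate at x
      have hz4 : (0:ℝ) < (z^2)^2 := by positivity
      have hD'x : D' x ≠ 0 := by
        simp only [hD', ← hz]
        exact mul_ne_zero hεne (div_ne_zero (neg_ne_zero.mpr hDx) (pow_ne_zero _ hz0))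
      have hD'sq : (D' x)^2 = (D x)^2 / (z^2)^2 := by
        have : (D' x)^2 = ε^2 * ((D x)^2/(z^2)^2) := by simp only [hD', ← hz]; ring
        rw [this, hε2, one_mul]
      have key : |(-(E x)) * z^2 - (-(D x)) * (2 * z^1 * D x)| ≤ K * (D x)^2 := by
        have e1 : |(-(E x)) * z^2| = |E x| * z^2 := by
          rw [abs_mul, abs_neg, abs_pow, sq_abs]
        have e2 : |(-(D x)) * (2 * z^1 * D x)| = 2 * |z| * (D x)^2 := by
          rw [abs_mul, abs_neg, abs_mul, abs_mul, pow_one, abs_two]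
          rw [show |D x| * (2 * |z| * |D x|) = 2 * |z| * (|D x| * |D x|) by ring, abs_mul_abs_self]
          ring_nf
        have h1 := abs_sub ((-(E x)) * z^2) ((-(D x)) * (2 * z^1 * D x))
        rw [e1, e2] at h1
        have h2 : |E x| * z^2 ≤ K * (D x)^2 * z^2 :=
          mul_le_mul_of_nonneg_right hEx (sq_nonneg z)
        have h3 : 2 * |z| * (D x)^2 ≤ 2 * s * (D x)^2 := by nlinarith [sq_nonneg (D x)]
        have hz2 : z^2 ≤ s^2 := by nlinarith [abs_nonneg z, sq_abs z]
        have hKs : K * (1 - s^2) = 2 * s := by rw [hK, div_mul_cancel₀ _ hγ0.ne']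
        have h5 : K * z^2 ≤ K * s^2 := mul_le_mul_of_nonneg_left hz2 hK0
        have h6 : K * z^2 + 2*s ≤ K := by linarith
        have h4 : K * (D x)^2 * z^2 + 2*s*(D x)^2 ≤ K * (D x)^2 := by
          nlinarith [sq_nonneg (D x), h6]
        linarith
      have hE'x : |E' x| ≤ K * (D' x)^2 := by
        have habs : |E' x| = |(-(E x)) * z^2 - (-(D x)) * (2 * z^1 * D x)| / (z^2)^2 := by
          simp only [hE', ← hz]
          rw [abs_mul, hεabs, one_mul, abs_div, abs_of_pos hz4]
        rw [habs, hD'sq, div_le_iff₀ hz4]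
        have heq : K * ((D x)^2/(z^2)^2) * (z^2)^2 = K * (D x)^2 := by
          field_simp
        rw [heq]
        exact key
      exact ⟨V', D', E', hV'open, hxV', hDT', hED', hD'x, hE'x⟩

lemma countable_T_preimage {α : ℝ} {S : Set ℝ} (hS : S.Countable) : (T α ⁻¹' S).Countable := by
  have hsub : T α ⁻¹' S ⊆ {0} ∪ ⋃ c ∈ S, ⋃ m : ℤ, ({1/(c + m), -(1/(c + m))} : Set ℝ) := by
    intro y hy
    by_cases hy0 : y = 0
    · exact Or.inl (by simp [hy0])
    · right
      have hTy : T α y = 1/|y| - ⌊1/|y| + 1 - α⌋ := by rw [T, if_neg hy0]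
      have habs0 : 0 < |y| := abs_pos.mpr hy0
      have h1 : 1/|y| = T α y + ⌊1/|y| + 1 - α⌋ := by rw [hTy]; ring
      have hc0 : T α y + (⌊1/|y| + 1 - α⌋ : ℝ) ≠ 0 := by
        rw [← h1]; positivity
      have habs : |y| = 1/(T α y + (⌊1/|y| + 1 - α⌋ : ℝ)) := by
        rw [← h1, one_div_one_div]
      refine mem_biUnion hy (mem_iUnion.mpr ⟨⌊1/|y| + 1 - α⌋, ?_⟩)
      rcases abs_choice y with h | h
      · exact Or.inl (by rw [← habs]; exact h.symm)
      · exact Or.inr (by simp only [mem_singleton_iff]; rw [← habs]; linarith)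
  refine Set.Countable.mono hsub ?_
  refine (countable_singleton 0).union (hS.biUnion fun c _ => countable_iUnion fun m => ?_)
  exact (Set.finite_singleton _).insert _ |>.countable

lemma countable_bad {α : ℝ} (hα : α ∈ Ioo (0:ℝ) 1) :
    (⋃ j : ℕ, (T α)^[j] ⁻¹' ({0} ∪ ⋃ m : ℤ, {y : ℝ | 1/|y| + 1 - α = m})).Countable := by
  have hD : ({0} ∪ ⋃ m : ℤ, {y : ℝ | 1/|y| + 1 - α = m} : Set ℝ).Countable := by
    refine (countable_singleton 0).union (countable_iUnion fun m => Set.Countable.mono ?_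
      (((Set.finite_singleton (-(1/((m:ℝ) - 1 + α)))).insert (1/((m:ℝ) - 1 + α))).countable))
    intro y hy
    simp only [mem_setOf_eq] at hy
    have h1 : 1/|y| = (m:ℝ) - 1 + α := by linarith
    have hy0 : y ≠ 0 := by
      rintro rfl
      simp only [abs_zero, div_zero, one_div, inv_zero] at h1
      have hm0 : (0:ℝ) < m := by linarith [hα.2]
      have hm1 : (m:ℝ) < 1 := by linarith [hα.1]
      have : (0:ℤ) < m := by exact_mod_cast hm0
      have : m < 1 := by exact_mod_cast hm1
      omega
    have habs0 : 0 < |y| := abs_pos.mpr hy0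
    have habs : |y| = 1/((m:ℝ) - 1 + α) := by rw [← h1, one_div_one_div]
    rcases abs_choice y with h | h
    · exact Or.inl (by rw [← habs]; exact h.symm)
    · exact Or.inr (by simp only [mem_singleton_iff]; rw [← habs]; linarith)
  have hmain : ∀ j : ℕ, ((T α)^[j] ⁻¹' ({0} ∪ ⋃ m : ℤ, {y : ℝ | 1/|y| + 1 - α = m})).Countable := by
    intro j
    induction j with
    | zero => simpa using hD
    | succ j ih =>
        rw [Function.iterate_succ, Set.preimage_comp]
        exact countable_T_preimage ih
  exact countable_iUnion hmain

set_option maxHeartbeats 1000000 in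
/-- for every `α ∈ (0,1)` and `n ≥ 1`, on the interior of each cylinder of
`𝒫_n` (an open set on which `T_α^n` is smooth with nonvanishing derivative) the derivative
of `g_{n,α} = 1/|(T_α^n)'|` is bounded by `2/(1-γ_α)`, `γ_α = max{α², (α-1)²}`. -/
theorem deriv_g_le (α : ℝ) (hα : α ∈ Ioo (0:ℝ) 1) (n : ℕ) (hn : 1 ≤ n)
    (U : Set ℝ) (hU : IsOpen U) (hUI : U ⊆ Icc (α - 1) α)
    (hsm : ContDiffOn ℝ 2 ((T α)^[n]) U)
    (hd : ∀ x ∈ U, deriv ((T α)^[n]) x ≠ 0) :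
    ∀ x ∈ U, |deriv (fun y => 1 / |deriv ((T α)^[n]) y|) x|
      ≤ 2 / (1 - max (α ^ 2) ((α - 1) ^ 2)) := by
  have hs0 : 0 < max α (1-α) := lt_of_lt_of_le hα.1 (le_max_left _ _)
  have hs1 : max α (1-α) < 1 := max_lt hα.2 (by linarith [hα.1])
  have hγs : max (α^2) ((α-1)^2) = (max α (1-α))^2 := by
    have he : (α-1)^2 = (1-α)^2 := by ring
    rcases le_total α (1-α) with h | h
    · rw [max_eq_right h, he, max_eq_right (by nlinarith [hα.1])]
    · rw [max_eq_left h, he, max_eq_left (by nlinarith [hα.1, hα.2])]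
  have hγ0 : 0 < 1 - max (α^2) ((α-1)^2) := by rw [hγs]; nlinarith
  set f := (T α)^[n] with hf
  set c := 2 / (1 - max (α^2) ((α-1)^2)) with hc
  intro x hx
  have hU1 : U ∈ 𝓝 x := hU.mem_nhds hx
  have hf1 : ContDiffOn ℝ 1 (deriv f) U := hsm.deriv_of_isOpen hU (by norm_num)
  have hf'diff : ∀ y ∈ U, DifferentiableAt ℝ (deriv f) y := fun y hy =>
    (hf1.differentiableOn (by norm_num)).differentiableAt (hU.mem_nhds hy)
  have hf''cont : ContinuousOn (deriv (deriv f)) U :=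
    hf1.continuousOn_deriv_of_isOpen hU (le_refl _)
  set ψ : ℝ → ℝ := fun y => |deriv (deriv f) y| / (deriv f y)^2 with hψ
  -- Step A : |deriv g x| = ψ x
  have hca : ContinuousAt (deriv f) x := (hf'diff x hx).continuousAt
  have hda : HasDerivAt (deriv f) (deriv (deriv f) x) x := (hf'diff x hx).hasDerivAt
  have hgψ : |deriv (fun y => 1 / |deriv f y|) x| = ψ x := by
    rcases (hd x hx).lt_or_gt with hneg | hpos
    · have hev : ∀ᶠ y in 𝓝 x, deriv f y < 0 := by
        filter_upwards [hca.preimage_mem_nhds (Iio_mem_nhds hneg)] with w hw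
        exact hw
      have heq : (fun y => 1 / |deriv f y|) =ᶠ[𝓝 x] fun y => -(deriv f y)⁻¹ := by
        filter_upwards [hev] with w hw
        rw [abs_of_neg hw, one_div, inv_neg]
      rw [heq.deriv_eq, ((hda.fun_inv (hd x hx)).fun_neg).deriv]
      simp [hψ, abs_div, abs_neg, abs_pow, sq_abs]
    · have hev : ∀ᶠ y in 𝓝 x, 0 < deriv f y := by
        filter_upwards [hca.preimage_mem_nhds (Ioi_mem_nhds hpos)] with w hw
        exact hw
      have heq : (fun y => 1 / |deriv f y|) =ᶠ[𝓝 x] fun y => (deriv f y)⁻¹ := by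
        filter_upwards [hev] with w hw
        rw [abs_of_pos hw, one_div]
      rw [heq.deriv_eq, (hda.fun_inv (hd x hx)).deriv]
      simp [hψ, abs_div, abs_neg, abs_pow, sq_abs]
  -- Step B : bound at good points
  have hgood_bound : ∀ y ∈ Icc (α-1) α,
      (∀ j : ℕ, (T α)^[j] y ≠ 0 ∧ ∀ m : ℤ, 1/|(T α)^[j] y| + 1 - α ≠ m) → ψ y ≤ c := by
    intro y hyI hyg
    obtain ⟨V, D, E, hV, hyV, hDT, hED, hDx, hEx⟩ := branch_package hα y hyI hyg n
    have hdf : ∀ w ∈ V, deriv f w = D w := fun w hw => (hDT w hw).deriv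
    have hev : deriv f =ᶠ[𝓝 y] D := Filter.eventuallyEq_of_mem (hV.mem_nhds hyV) hdf
    have h2 : deriv (deriv f) y = E y := by rw [hev.deriv_eq]; exact (hED y hyV).deriv
    have h1 : deriv f y = D y := hdf y hyV
    have hD2 : (0:ℝ) < (D y)^2 := lt_of_le_of_ne (sq_nonneg _) (Ne.symm (pow_ne_zero 2 hDx))
    show |deriv (deriv f) y| / (deriv f y)^2 ≤ c
    rw [h1, h2, div_le_iff₀ hD2]
    refine le_trans hEx ?_
    have hK2 : 2 * max α (1-α) / (1 - (max α (1-α))^2) ≤ c := by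
      rw [hc, hγs]
      apply div_le_div_of_nonneg_right ?_ (by nlinarith) |>.trans_eq rfl
      · linarith
    exact mul_le_mul_of_nonneg_right hK2 (sq_nonneg _)
  -- Step C : density
  set Bad := ⋃ j : ℕ, (T α)^[j] ⁻¹' ({0} ∪ ⋃ m : ℤ, {y : ℝ | 1/|y| + 1 - α = m}) with hBad
  have hBc : Bad.Countable := countable_bad hα
  have hdense : Dense Badᶜ := hBc.dense_compl ℝ
  have hnb : (𝓝[Badᶜ] x).NeBot := mem_closure_iff_nhdsWithin_neBot.mp (hdense x)
  have hψc : ContinuousAt ψ x := by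
    exact ((hf''cont.continuousAt hU1).abs).div (hca.pow 2) (pow_ne_zero 2 (hd x hx))
  have hbound : ∀ᶠ y in 𝓝[Badᶜ] x, ψ y ≤ c := by
    filter_upwards [mem_nhdsWithin_of_mem_nhds hU1, self_mem_nhdsWithin] with y hyU hyB
    refine hgood_bound y (hUI hyU) ?_
    intro j
    have hj : (T α)^[j] y ∉ ({0} ∪ ⋃ m : ℤ, {w : ℝ | 1/|w| + 1 - α = m} : Set ℝ) := by
      intro hmem
      exact hyB (mem_iUnion.mpr ⟨j, hmem⟩)
    constructor
    · intro h0
      exact hj (Or.inl (by simp [h0]))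
    · intro m hm
      exact hj (Or.inr (mem_iUnion.mpr ⟨m, hm⟩))
  have htend : Filter.Tendsto ψ (𝓝[Badᶜ] x) (𝓝 (ψ x)) :=
    hψc.tendsto.mono_left nhdsWithin_le_nhds
  have hψx : ψ x ≤ c := le_of_tendsto htend hbound
  calc |deriv (fun y => 1 / |deriv f y|) x| = ψ x := hgψ
  _ ≤ c := hψx
end

section
/- There exists a universal constant C₀ such that for every α ∈ (0,1), the total variation on [α−1, α] of the function g_{1,α} (equal to x² on the interior of every cylinder of 𝒫_1 and 0 on the boundary points of cylinders) is at most C₀. -/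
open Set
open scoped ENNReal Classical

/-- The function `g_{1,α}`: equal to `x²` on the interior of each cylinder of `𝒫_1`
(i.e. away from `0`, from the branch endpoints `±1/(j+α)` and from the boundary),
and `0` elsewhere. -/
noncomputable def g1 (α : ℝ) (x : ℝ) : ℝ :=
  if x ∈ Ioo (α - 1) α ∧ x ≠ 0 ∧ ∀ j : ℤ, x ≠ 1 / (j + α) ∧ x ≠ -(1 / (j + α))
  then x ^ 2 else 0

private lemma real_edist_eq (x y : ℝ) : edist x y = ENNReal.ofReal |x - y| := by
  rw [edist_dist, Real.dist_eq]

/-- Subadditivity of variation for difference of functions. -/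
private lemma evar_sub_le (F G : ℝ → ℝ) (s : Set ℝ) :
    eVariationOn (fun x => F x - G x) s ≤ eVariationOn F s + eVariationOn G s := by
  apply iSup_le
  rintro ⟨n, u, hu, us⟩
  calc ∑ i ∈ Finset.range n, edist (F (u (i+1)) - G (u (i+1))) (F (u i) - G (u i))
      ≤ ∑ i ∈ Finset.range n,
          (edist (F (u (i+1))) (F (u i)) + edist (G (u (i+1))) (G (u i))) := by
        refine Finset.sum_le_sum fun i _ => ?_
        have : F (u (i+1)) - G (u (i+1)) = F (u (i+1)) + -(G (u (i+1))) := by ring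
        rw [this, show F (u i) - G (u i) = F (u i) + -(G (u i)) by ring]
        refine (edist_add_add_le _ _ _ _).trans ?_
        rw [edist_neg_neg]
    _ = (∑ i ∈ Finset.range n, edist (F (u (i+1))) (F (u i)))
        + ∑ i ∈ Finset.range n, edist (G (u (i+1))) (G (u i)) := Finset.sum_add_distrib
    _ ≤ _ := add_le_add (eVariationOn.sum_le (f := F) (n := n) hu us) (eVariationOn.sum_le (f := G) (n := n) hu us)

/-- If all finite sub-sums of `|f|` over `s` are bounded by `M`, then the variation
of `f` on `s` is at most `2M`. -/
private lemma evar_le_of_finsum_le {f : ℝ → ℝ} {s : Set ℝ} {M : ℝ}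
    (hM : ∀ F : Finset ℝ, ↑F ⊆ s → ∑ x ∈ F, |f x| ≤ M) :
    eVariationOn f s ≤ ENNReal.ofReal (2 * M) := by
  apply iSup_le
  rintro ⟨n, u, hu, us⟩
  have key : ∀ m : ℕ, ∑ i ∈ Finset.range m, |f (u (i+1)) - f (u i)|
      ≤ 2 * (∑ x ∈ (Finset.range (m+1)).image u, |f x|) - |f (u m)| := by
    intro m
    induction m with
    | zero =>
      have := abs_nonneg (f (u 0))
      simp only [Finset.range_zero, Finset.sum_empty, zero_add, Finset.range_one,
        Finset.image_singleton, Finset.sum_singleton]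
      linarith
    | succ m ih =>
      rw [Finset.sum_range_succ]
      have himg : (Finset.range (m+2)).image u
          = insert (u (m+1)) ((Finset.range (m+1)).image u) := by
        rw [show m+2 = (m+1)+1 from rfl, Finset.range_add_one, Finset.image_insert]
      by_cases he : u (m+1) = u m
      · have h0 : |f (u (m+1)) - f (u m)| = 0 := by rw [he, sub_self, abs_zero]
        have hin : u (m+1) ∈ (Finset.range (m+1)).image u := by
          rw [he]; exact Finset.mem_image_of_mem u (Finset.self_mem_range_succ m)
        rw [himg, Finset.insert_eq_self.2 hin, h0, he]
        linarith [ih]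
      · have hnotin : u (m+1) ∉ (Finset.range (m+1)).image u := by
          intro hmem
          obtain ⟨i, hi, hiu⟩ := Finset.mem_image.1 hmem
          have hi' : i ≤ m := Nat.lt_succ_iff.1 (Finset.mem_range.1 hi)
          exact he (le_antisymm (by rw [← hiu]; exact hu hi') (hu (Nat.le_succ m)))
        rw [himg, Finset.sum_insert hnotin]
        have habs : |f (u (m+1)) - f (u m)| ≤ |f (u (m+1))| + |f (u m)| := abs_sub _ _
        linarith [ih]
  have hsum : ∑ i ∈ Finset.range n, edist (f (u (i+1))) (f (u i))
      = ENNReal.ofReal (∑ i ∈ Finset.range n, |f (u (i+1)) - f (u i)|) := by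
    rw [ENNReal.ofReal_sum_of_nonneg (fun i _ => abs_nonneg _)]
    exact Finset.sum_congr rfl fun i _ => real_edist_eq _ _
  rw [hsum]
  apply ENNReal.ofReal_le_ofReal
  have h1 := key n
  have h2 : ∑ x ∈ (Finset.range (n+1)).image u, |f x| ≤ M := by
    apply hM
    intro x hx
    simp only [Finset.coe_image, Set.mem_image] at hx
    obtain ⟨i, _, rfl⟩ := hx
    exact us i
  have h3 : 0 ≤ |f (u n)| := abs_nonneg _
  linarith

private lemma evar_neg_eq (f : ℝ → ℝ) (s : Set ℝ) :
    eVariationOn (fun x => -(f x)) s = eVariationOn f s := by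
  dsimp only [eVariationOn]
  congr 1 with p : 1
  congr 1 with i : 1
  exact edist_neg_neg _ _

private lemma antitoneOn_evar_le {f : ℝ → ℝ} {s : Set ℝ} (hf : AntitoneOn f s) {a b : ℝ}
    (as : a ∈ s) (bs : b ∈ s) :
    eVariationOn f (s ∩ Icc a b) ≤ ENNReal.ofReal (f a - f b) := by
  rw [← evar_neg_eq f]
  have hmono : MonotoneOn (fun x => -(f x)) s := fun x hx y hy hxy => neg_le_neg (hf hx hy hxy)
  have := hmono.eVariationOn_le as bs
  refine this.trans (le_of_eq ?_)
  congr 1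
  ring

/-- Partial sums of `1/(n+1)²`. -/
private lemma sum_inv_sq_nat (N : ℕ) :
    ∑ n ∈ Finset.range N, (((n : ℝ) + 1)⁻¹) ^ 2 ≤ 2 - 2 / ((N : ℝ) + 1) := by
  induction N with
  | zero => norm_num
  | succ N ih =>
    rw [Finset.sum_range_succ]
    have hc : (0:ℝ) < (N:ℝ) + 1 := by positivity
    have hc2 : (0:ℝ) < (N:ℝ) + 2 := by positivity
    have hstep : (((N : ℝ) + 1)⁻¹) ^ 2 ≤ 2 / ((N:ℝ) + 1) - 2 / ((N:ℝ) + 2) := by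
      rw [div_sub_div _ _ (ne_of_gt hc) (ne_of_gt hc2), inv_pow,
        inv_le_iff_one_le_mul₀ (by positivity), div_mul_eq_mul_div,
        le_div_iff₀ (by positivity)]
      ring_nf
      nlinarith [sq_nonneg ((N:ℝ))]
    have : ((N:ℝ)+1+1) = (N:ℝ)+2 := by ring
    rw [Nat.cast_succ, this]
    linarith

private lemma sum_int_inv_sq (K : Finset ℤ) (hK : ∀ k ∈ K, 1 ≤ k) :
    ∑ k ∈ K, (((k : ℝ))⁻¹) ^ 2 ≤ 2 := by
  set N := K.sup Int.toNat with hN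
  have hsub : K ⊆ (Finset.range N).image (fun n : ℕ => (n : ℤ) + 1) := by
    intro k hk
    have h1 : 1 ≤ k := hK k hk
    refine Finset.mem_image.2 ⟨k.toNat - 1, Finset.mem_range.2 ?_, ?_⟩
    · have : k.toNat ≤ N := Finset.le_sup hk
      omega
    · omega
  calc ∑ k ∈ K, (((k : ℝ))⁻¹) ^ 2
      ≤ ∑ k ∈ (Finset.range N).image (fun n : ℕ => (n : ℤ) + 1), (((k : ℝ))⁻¹) ^ 2 :=
        Finset.sum_le_sum_of_subset_of_nonneg hsub (fun _ _ _ => by positivity)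
    _ = ∑ n ∈ Finset.range N, (((n : ℝ) + 1)⁻¹) ^ 2 := by
        rw [Finset.sum_image (by intro a _ b _ h; have h' : (a:ℤ) + 1 = (b:ℤ) + 1 := h; omega)]
        exact Finset.sum_congr rfl fun n _ => by push_cast; ring_nf
    _ ≤ 2 - 2 / ((N : ℝ) + 1) := sum_inv_sq_nat N
    _ ≤ 2 := by
        have : (0:ℝ) < 2 / ((N:ℝ)+1) := by positivity
        linarith

/-- Key structural facts about a "bad" point `x = ±1/(j+α)` in the interior. -/
private lemma bad_point_props {α x : ℝ} (hα : α ∈ Ioo (0:ℝ) 1)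
    (hx : x ∈ Icc (α - 1) α) (hx0 : x ≠ 0) (hxa : x ≠ α) (hxb : x ≠ α - 1)
    {j : ℤ} (hj : x = 1 / (j + α) ∨ x = -(1 / (j + α))) :
    1 < |x|⁻¹ ∧ 1 ≤ ⌊|x|⁻¹⌋ ∧
      (Int.fract |x|⁻¹ = α ∨ Int.fract |x|⁻¹ = 1 - α) ∧
      x ^ 2 ≤ (((⌊|x|⁻¹⌋ : ℝ))⁻¹) ^ 2 := by
  obtain ⟨hα0, hα1⟩ := hα
  have hxlt : x < α := lt_of_le_of_ne hx.2 hxa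
  have hxgt : α - 1 < x := lt_of_le_of_ne hx.1 (Ne.symm hxb)
  have habs1 : |x| < 1 := by
    rw [abs_lt]; constructor <;> linarith
  have habs0 : 0 < |x| := abs_pos.2 hx0
  have hy1 : 1 < |x|⁻¹ := (one_lt_inv₀ habs0).2 habs1
  have hjα : (j : ℝ) + α ≠ 0 := by
    intro h
    apply hx0
    rcases hj with h1 | h1 <;> rw [h1, h] <;> simp
  have hxabs : |x| = |(j : ℝ) + α|⁻¹ := by
    rcases hj with h1 | h1
    · rw [h1, one_div, abs_inv]
    · rw [h1, abs_neg, one_div, abs_inv]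
  have hyabs : |x|⁻¹ = |(j : ℝ) + α| := by rw [hxabs, inv_inv]
  have hfract : Int.fract |x|⁻¹ = α ∨ Int.fract |x|⁻¹ = 1 - α := by
    rcases le_or_gt 0 ((j:ℝ) + α) with hpos | hneg
    · left
      rw [hyabs, abs_of_nonneg hpos, Int.fract_intCast_add, Int.fract_eq_self.2 ⟨le_of_lt hα0, hα1⟩]
    · right
      rw [hyabs, abs_of_neg hneg]
      have : -((j:ℝ) + α) = ((-j - 1 : ℤ) : ℝ) + (1 - α) := by push_cast; ring
      rw [this, Int.fract_intCast_add, Int.fract_eq_self.2 ⟨by linarith, by linarith⟩]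
  have hfloor : 1 ≤ ⌊|x|⁻¹⌋ := by
    have h1 : (0:ℝ) < (⌊|x|⁻¹⌋ : ℝ) := by
      rcases hfract with hf | hf
      · have := Int.floor_add_fract (|x|⁻¹)
        rw [hf] at this
        nlinarith
      · have := Int.floor_add_fract (|x|⁻¹)
        rw [hf] at this
        nlinarith
    have h2 : 0 < ⌊|x|⁻¹⌋ := by exact_mod_cast h1
    omega
  refine ⟨hy1, hfloor, hfract, ?_⟩
  have hfl : (0:ℝ) < (⌊|x|⁻¹⌋ : ℝ) := by exact_mod_cast hfloor
  have hle : (⌊|x|⁻¹⌋ : ℝ) ≤ |x|⁻¹ := Int.floor_le _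
  have h1 : |x| ≤ ((⌊|x|⁻¹⌋ : ℝ))⁻¹ := by
    have h2 : (|x|⁻¹)⁻¹ ≤ ((⌊|x|⁻¹⌋ : ℝ))⁻¹ := inv_anti₀ hfl hle
    rwa [inv_inv] at h2
  calc x ^ 2 = |x| ^ 2 := (sq_abs x).symm
    _ ≤ (((⌊|x|⁻¹⌋ : ℝ))⁻¹) ^ 2 := by
        apply pow_le_pow_left₀ (abs_nonneg x) h1

/-- The finite-sum bound for the correction function `x² - g1 α x`. -/
private lemma finsum_bound {α : ℝ} (hα : α ∈ Ioo (0:ℝ) 1) (F : Finset ℝ)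
    (hF : ↑F ⊆ Icc (α - 1) α) :
    ∑ x ∈ F, |x ^ 2 - g1 α x| ≤ 11 := by
  obtain ⟨hα0, hα1⟩ := hα
  have hval : ∀ x : ℝ, |x ^ 2 - g1 α x| =
      if x ∈ Ioo (α - 1) α ∧ x ≠ 0 ∧ ∀ j : ℤ, x ≠ 1 / (j + α) ∧ x ≠ -(1 / (j + α))
      then 0 else x ^ 2 := by
    intro x
    unfold g1
    split
    · simp
    · rw [sub_zero, abs_of_nonneg (sq_nonneg x)]
  have hsq1 : ∀ x ∈ F, x ^ 2 ≤ 1 := by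
    intro x hx
    have hx' := hF hx
    have h1 : |x| ≤ 1 := by
      rw [abs_le]; constructor
      · linarith [hx'.1]
      · linarith [hx'.2]
    calc x ^ 2 = |x| ^ 2 := (sq_abs x).symm
      _ ≤ 1 ^ 2 := pow_le_pow_left₀ (abs_nonneg x) h1 2
      _ = 1 := one_pow 2
  classical
  set T : Finset ℝ := {α - 1, 0, α} with hT
  have hsplit := Finset.sum_inter_add_sum_sdiff F T (fun x => |x ^ 2 - g1 α x|)
  have hbound1 : ∑ x ∈ F ∩ T, |x ^ 2 - g1 α x| ≤ 3 := by
    have : ∀ x ∈ F ∩ T, |x ^ 2 - g1 α x| ≤ 1 := by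
      intro x hx
      rw [hval x]
      split
      · norm_num
      · exact hsq1 x (Finset.mem_of_mem_inter_left hx)
    calc ∑ x ∈ F ∩ T, |x ^ 2 - g1 α x| ≤ ∑ _x ∈ F ∩ T, (1:ℝ) := Finset.sum_le_sum this
      _ = (F ∩ T).card := by simp
      _ ≤ T.card := by exact_mod_cast Nat.cast_le.2 (Finset.card_le_card (Finset.inter_subset_right))
      _ ≤ 3 := by
          have h3 : T.card ≤ 3 := by
            rw [hT]
            have h4 := Finset.card_insert_le (α-1) ({0, α} : Finset ℝ)
            have h5 := Finset.card_insert_le (0:ℝ) ({α} : Finset ℝ)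
            simp only [Finset.card_singleton] at h4 h5
            omega
          exact_mod_cast h3
  -- the part away from the three special points
  set B : Finset ℝ := (F \ T).filter (fun x =>
    ¬ (x ∈ Ioo (α - 1) α ∧ x ≠ 0 ∧ ∀ j : ℤ, x ≠ 1 / (j + α) ∧ x ≠ -(1 / (j + α)))) with hB
  have hbound2 : ∑ x ∈ F \ T, |x ^ 2 - g1 α x| ≤ 8 := by
    have hrw : ∑ x ∈ F \ T, |x ^ 2 - g1 α x| = ∑ x ∈ B, x ^ 2 := by
      rw [hB, Finset.sum_filter]
      refine Finset.sum_congr rfl fun x _ => ?_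
      rw [hval x]
      by_cases h : (x ∈ Ioo (α - 1) α ∧ x ≠ 0 ∧ ∀ j : ℤ, x ≠ 1 / (j + α) ∧ x ≠ -(1 / (j + α)))
      · rw [if_pos h, if_neg (not_not_intro h)]
      · rw [if_neg h, if_pos h]
    rw [hrw]
    -- properties of elements of B
    have hBprop : ∀ x ∈ B, 1 ≤ ⌊|x|⁻¹⌋ ∧
        (Int.fract |x|⁻¹ = α ∨ Int.fract |x|⁻¹ = 1 - α) ∧
        x ^ 2 ≤ (((⌊|x|⁻¹⌋ : ℝ))⁻¹) ^ 2 ∧ x ≠ 0 := by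
      intro x hx
      rw [hB, Finset.mem_filter] at hx
      obtain ⟨hxFT, hxbad⟩ := hx
      have hxF : x ∈ F := (Finset.mem_sdiff.1 hxFT).1
      have hxT : x ∉ T := (Finset.mem_sdiff.1 hxFT).2
      have hx0 : x ≠ 0 := fun h => hxT (by rw [hT, h]; simp)
      have hxa : x ≠ α := fun h => hxT (by rw [hT, h]; simp)
      have hxb : x ≠ α - 1 := fun h => hxT (by rw [hT, h]; simp)
      have hxI : x ∈ Icc (α - 1) α := hF hxF
      have hxO : x ∈ Ioo (α - 1) α :=
        ⟨lt_of_le_of_ne hxI.1 (Ne.symm hxb), lt_of_le_of_ne hxI.2 hxa⟩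
      push_neg at hxbad
      obtain ⟨j, hj⟩ := hxbad hxO hx0
      have hj' : x = 1 / (j + α) ∨ x = -(1 / (j + α)) := by
        by_cases h1 : x = 1 / (j + α)
        · exact Or.inl h1
        · exact Or.inr (by tauto)
      obtain ⟨_, h2, h3, h4⟩ := bad_point_props ⟨hα0, hα1⟩ hxI hx0 hxa hxb hj'
      exact ⟨h2, h3, h4, hx0⟩
    -- the classifying injection
    set ι : ℝ → Bool × Bool × ℤ := fun x =>
      (decide (0 < x), decide (Int.fract |x|⁻¹ = α), ⌊|x|⁻¹⌋) with hι
    have hinj : ∀ x ∈ B, ∀ y ∈ B, ι x = ι y → x = y := by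
      intro x hx y hy hxy
      obtain ⟨_, hfx, _, hx0⟩ := hBprop x hx
      obtain ⟨_, hfy, _, hy0⟩ := hBprop y hy
      rw [hι] at hxy
      simp only [Prod.mk.injEq, decide_eq_decide] at hxy
      obtain ⟨hsign, hfeq, hfloor⟩ := hxy
      have hfract : Int.fract |x|⁻¹ = Int.fract |y|⁻¹ := by
        by_cases hc : Int.fract |x|⁻¹ = α
        · rw [hc, (hfeq.1 hc).symm] -- careful
        · have hx1 : Int.fract |x|⁻¹ = 1 - α := by tauto
          have hy1 : Int.fract |y|⁻¹ = 1 - α := by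
            have : ¬ Int.fract |y|⁻¹ = α := fun h => hc (hfeq.2 h)
            tauto
          rw [hx1, hy1]
      have hyy : |x|⁻¹ = |y|⁻¹ := by
        have h1 := Int.floor_add_fract (|x|⁻¹)
        have h2 := Int.floor_add_fract (|y|⁻¹)
        rw [← h1, ← h2, hfloor, hfract]
      have habs : |x| = |y| := by
        have := congrArg (·⁻¹) hyy
        simpa using this
      rcases lt_trichotomy 0 x with hpx | hpx | hpx
      · have hpy : 0 < y := by rw [← hsign]; exact hpx
        rw [← abs_of_pos hpx, ← abs_of_pos hpy, habs]
      · exact absurd hpx.symm hx0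
      · have hpy : y < 0 := by
          rcases lt_trichotomy 0 y with h | h | h
          · exact absurd (hsign.2 h) (not_lt.2 (le_of_lt hpx))
          · exact absurd h.symm hy0
          · exact h
        have : -x = -y := by
          rw [← abs_of_neg hpx, ← abs_of_neg hpy, habs]
        linarith
    have hstep1 : ∑ x ∈ B, x ^ 2 ≤ ∑ x ∈ B, (((⌊|x|⁻¹⌋ : ℝ))⁻¹) ^ 2 :=
      Finset.sum_le_sum fun x hx => (hBprop x hx).2.2.1
    set G : Finset (Bool × Bool × ℤ) := B.image ι with hG
    have hstep2 : ∑ x ∈ B, (((⌊|x|⁻¹⌋ : ℝ))⁻¹) ^ 2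
        = ∑ p ∈ G, (((p.2.2 : ℝ))⁻¹) ^ 2 := by
      rw [hG, Finset.sum_image hinj]
    set K : Finset ℤ := G.image (fun p => p.2.2) with hK
    have hKpos : ∀ k ∈ K, 1 ≤ k := by
      intro k hk
      rw [hK] at hk
      obtain ⟨p, hp, rfl⟩ := Finset.mem_image.1 hk
      rw [hG] at hp
      obtain ⟨x, hx, rfl⟩ := Finset.mem_image.1 hp
      exact (hBprop x hx).1
    have hstep3 : ∑ p ∈ G, (((p.2.2 : ℝ))⁻¹) ^ 2
        ≤ ∑ p ∈ (Finset.univ : Finset Bool) ×ˢ ((Finset.univ : Finset Bool) ×ˢ K),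
            (((p.2.2 : ℝ))⁻¹) ^ 2 := by
      apply Finset.sum_le_sum_of_subset_of_nonneg
      · intro p hp
        refine Finset.mem_product.2 ⟨Finset.mem_univ _, Finset.mem_product.2
          ⟨Finset.mem_univ _, ?_⟩⟩
        rw [hK]
        exact Finset.mem_image.2 ⟨p, hp, rfl⟩
      · intro p _ _
        positivity
    have hstep4 : ∑ p ∈ (Finset.univ : Finset Bool) ×ˢ ((Finset.univ : Finset Bool) ×ˢ K),
        (((p.2.2 : ℝ))⁻¹) ^ 2 = 4 * ∑ k ∈ K, (((k : ℝ))⁻¹) ^ 2 := by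
      simp only [Finset.sum_product, Finset.sum_const, Finset.card_univ,
        Fintype.card_bool, smul_eq_mul]
      ring
    have hstep5 := sum_int_inv_sq K hKpos
    linarith
  linarith [hsplit, hbound1, hbound2]

/-- there is a universal finite constant `C₀` bounding
`var_{[α-1,α]} g_{1,α}` for every `α ∈ (0,1)`. -/
theorem var_g1_uniformly_bounded :
    ∃ C₀ : ℝ≥0∞, C₀ < ⊤ ∧ ∀ α ∈ Ioo (0:ℝ) 1,
      eVariationOn (g1 α) (Icc (α - 1) α) ≤ C₀ := by
  refine ⟨ENNReal.ofReal 24, ENNReal.ofReal_lt_top, ?_⟩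
  intro α hα
  obtain ⟨hα0, hα1⟩ := hα
  set s : Set ℝ := Icc (α - 1) α with hs
  -- variation of x ↦ x² on s is at most 2
  have hsq : eVariationOn (fun x : ℝ => x ^ 2) s ≤ ENNReal.ofReal 2 := by
    have h0s : (0:ℝ) ∈ s := ⟨by linarith, by linarith⟩
    have hadd := eVariationOn.Icc_add_Icc (fun x : ℝ => x ^ 2)
      (show α - 1 ≤ (0:ℝ) by linarith) (show (0:ℝ) ≤ α by linarith) h0s
    have hss : s ∩ Icc (α - 1) α = s := by
      rw [hs, inter_self]
    have hleft : s ∩ Icc (α - 1) 0 = Icc (α - 1) 0 :=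
      inter_eq_self_of_subset_right (Icc_subset_Icc le_rfl (by linarith))
    have hright : s ∩ Icc 0 α = Icc 0 α :=
      inter_eq_self_of_subset_right (Icc_subset_Icc (by linarith) le_rfl)
    rw [hss, hleft, hright] at hadd
    have hanti : AntitoneOn (fun x : ℝ => x ^ 2) (Icc (α - 1) 0) := by
      intro x hx y hy hxy
      simp only
      nlinarith [hx.2, hy.2, hx.1, hy.1]
    have hmono : MonotoneOn (fun x : ℝ => x ^ 2) (Icc 0 α) := by
      intro x hx y hy hxy
      simp only
      nlinarith [hx.1, hy.1]
    have h1 : eVariationOn (fun x : ℝ => x ^ 2) (Icc (α - 1) 0) ≤ ENNReal.ofReal 1 := by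
      have := antitoneOn_evar_le hanti (left_mem_Icc.2 (by linarith))
        (right_mem_Icc.2 (by linarith))
      rw [inter_self] at this
      refine this.trans (ENNReal.ofReal_le_ofReal ?_)
      nlinarith
    have h2 : eVariationOn (fun x : ℝ => x ^ 2) (Icc 0 α) ≤ ENNReal.ofReal 1 := by
      have := hmono.eVariationOn_le (left_mem_Icc.2 (by linarith))
        (right_mem_Icc.2 (by linarith))
      rw [inter_self] at this
      refine this.trans (ENNReal.ofReal_le_ofReal ?_)
      nlinarith
    calc eVariationOn (fun x : ℝ => x ^ 2) s
        = eVariationOn (fun x : ℝ => x ^ 2) (Icc (α-1) 0)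
          + eVariationOn (fun x : ℝ => x ^ 2) (Icc 0 α) := hadd.symm
      _ ≤ ENNReal.ofReal 1 + ENNReal.ofReal 1 := add_le_add h1 h2
      _ = ENNReal.ofReal 2 := by
          rw [← ENNReal.ofReal_add (by norm_num) (by norm_num)]
          norm_num
  -- variation of the correction
  have hcorr : eVariationOn (fun x => x ^ 2 - g1 α x) s ≤ ENNReal.ofReal 22 := by
    have := evar_le_of_finsum_le (f := fun x => x ^ 2 - g1 α x) (s := s) (M := 11)
      (fun F hF => finsum_bound ⟨hα0, hα1⟩ F hF)
    convert this using 2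
    norm_num
  -- combine
  have hdecomp : g1 α = fun x => x ^ 2 - (x ^ 2 - g1 α x) := by
    funext x; ring
  calc eVariationOn (g1 α) s
      = eVariationOn (fun x => x ^ 2 - (x ^ 2 - g1 α x)) s := by rw [← hdecomp]
    _ ≤ eVariationOn (fun x : ℝ => x ^ 2) s + eVariationOn (fun x => x ^ 2 - g1 α x) s :=
        evar_sub_le _ _ _
    _ ≤ ENNReal.ofReal 2 + ENNReal.ofReal 22 := add_le_add hsq hcorr
    _ = ENNReal.ofReal 24 := by
        rw [← ENNReal.ofReal_add (by norm_num) (by norm_num)]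
        norm_num
end

section
/- Let α ∈ (0,1], 0 < δ < 1, and K > max{1/α, 1/(1−α)} (K ≥ 1 if α = 1). Then there exists A > 0 such that every f ∈ B_{K,δ} (with representative of finite K,δ-norm) satisfies |f(x)| ≤ A·‖f‖_{K,δ}/|x|^δ for all x ∈ [α−1, α] ∖ {0}. -/
open Set MeasureTheory
open scoped ENNReal

lemma bv_integrableOn {f : ℝ → ℝ} {a b : ℝ}
    (h : eVariationOn f (Icc a b) ≠ ⊤) : IntegrableOn f (Icc a b) := by
  rcases le_or_gt a b with hab | hab
  · have hbv : LocallyBoundedVariationOn f (Icc a b) :=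
      BoundedVariationOn.locallyBoundedVariationOn h
    obtain ⟨p, q, hp, hq, hfpq⟩ := hbv.exists_monotoneOn_sub_monotoneOn
    have huIcc : uIcc a b = Icc a b := uIcc_of_le hab
    have hp' : MonotoneOn p (uIcc a b) := by rw [huIcc]; exact hp
    have hq' : MonotoneOn q (uIcc a b) := by rw [huIcc]; exact hq
    have hfI : IntervalIntegrable f volume a b := by
      rw [hfpq]; exact hp'.intervalIntegrable.sub hq'.intervalIntegrable
    exact (intervalIntegrable_iff_integrableOn_Icc_of_le hab).1 hfI
  · rw [Icc_eq_empty hab.not_ge]; exact integrableOn_empty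

lemma abs_le_var_add_avg {f : ℝ → ℝ} {a b x : ℝ} (hab : a < b) (hx : x ∈ Icc a b)
    (hvar : eVariationOn f (Icc a b) ≠ ⊤) :
    |f x| ≤ (eVariationOn f (Icc a b)).toReal + (∫ y in Icc a b, |f y|) / (b - a) := by
  have hba : (0:ℝ) < b - a := by linarith
  have hint : IntegrableOn f (Icc a b) := bv_integrableOn hvar
  have hintabs : IntegrableOn (fun y => |f y|) (Icc a b) := hint.abs
  set V := (eVariationOn f (Icc a b)).toReal with hV
  set I := ∫ y in Icc a b, |f y| with hI
  have hμ : volume (Icc a b) < ⊤ := by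
    rw [Real.volume_Icc]; exact ENNReal.ofReal_lt_top
  have hconstV : IntegrableOn (fun _ : ℝ => V) (Icc a b) :=
    integrableOn_const hμ.ne
  have hconstx : IntegrableOn (fun _ : ℝ => |f x|) (Icc a b) :=
    integrableOn_const hμ.ne
  have key : ∀ y ∈ Icc a b, |f x| ≤ V + |f y| := by
    intro y hy
    have h1 : edist (f x) (f y) ≤ eVariationOn f (Icc a b) := eVariationOn.edist_le f hx hy
    have h2 : dist (f x) (f y) ≤ V := by
      have := ENNReal.toReal_mono hvar h1
      rwa [edist_dist, ENNReal.toReal_ofReal dist_nonneg] at this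
    rw [Real.dist_eq] at h2
    have h3 := abs_sub_abs_le_abs_sub (f x) (f y)
    linarith
  have hconst : ∫ _ in Icc a b, |f x| = (b - a) * |f x| := by
    rw [setIntegral_const, measureReal_def, Real.volume_Icc, ENNReal.toReal_ofReal (by linarith), smul_eq_mul]
  have hmono : ∫ _ in Icc a b, |f x| ≤ ∫ y in Icc a b, (V + |f y|) :=
    setIntegral_mono_on hconstx (hconstV.add hintabs) measurableSet_Icc key
  have hsplit : ∫ y in Icc a b, (V + |f y|) = (b - a) * V + I := by
    rw [integral_add hconstV hintabs, setIntegral_const, measureReal_def, Real.volume_Icc,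
      ENNReal.toReal_ofReal (by linarith), smul_eq_mul]
  have hmain : (b - a) * |f x| ≤ (b - a) * V + I := by
    rw [← hconst, ← hsplit]; exact hmono
  calc |f x| ≤ ((b - a) * V + I) / (b - a) := by
        rw [le_div_iff₀ hba, mul_comm]; exact hmain
    _ = V + I / (b - a) := by rw [add_div, mul_div_cancel_left₀ _ hba.ne']

/-- The `(K,δ)`-norm of a function on `I_α = [α-1, α]`:
`sup_{k ≥ K} ( k^{-δ} var_{L_k} g + ∫_{L_k} |g| )`, where
`L_k = [α-1, -1/(k+α)] ∪ [1/(k+α), α]`. -/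
noncomputable def kdNorm (α : ℝ) (K : ℕ) (δ : ℝ) (g : ℝ → ℝ) : ℝ≥0∞ :=
  ⨆ k : ℕ, ⨆ _ : K ≤ k,
    (ENNReal.ofReal ((k : ℝ) ^ (-δ)) *
        (eVariationOn g (Icc (1 / (k + α)) α) + eVariationOn g (Icc (α - 1) (-(1 / (k + α))))) +
      ENNReal.ofReal (∫ x in Icc (α - 1) (-(1 / (k + α))) ∪ Icc (1 / (k + α)) α, |g x|))

set_option maxHeartbeats 1000000 in
/-- for `α ∈ (0,1]`, `0 < δ < 1` and `K > max{1/α, 1/(1-α)}` (`K ≥ 1` when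
`α = 1`), there is `A > 0` with `|f(x)| ≤ A ‖f‖_{K,δ} / |x|^δ` for every `f ∈ B_{K,δ}`
and every `x ∈ [α-1, α] \ {0}`. -/
theorem BKdelta_pointwise_bound (α : ℝ) (hα : α ∈ Ioc (0:ℝ) 1)
    (δ : ℝ) (hδ : δ ∈ Ioo (0:ℝ) 1) (K : ℕ)
    (hK1 : α < 1 → 1 / α < K ∧ 1 / (1 - α) < K) (hK2 : α = 1 → 1 ≤ K) :
    ∃ A > 0, ∀ f : ℝ → ℝ, kdNorm α K δ f ≠ ⊤ →
      ∀ x ∈ Icc (α - 1) α, x ≠ 0 →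
        |f x| ≤ A * (kdNorm α K δ f).toReal / |x| ^ δ := by
  obtain ⟨hα0, hα1⟩ := hα
  obtain ⟨hδ0, hδ1⟩ := hδ
  have hK : 1 ≤ K := by
    rcases lt_or_eq_of_le hα1 with h | h
    · have h2 := (hK1 h).1
      have h1 : (1:ℝ) ≤ 1/α := by rw [le_div_iff₀ hα0]; linarith
      have : (1:ℝ) < K := lt_of_le_of_lt h1 h2
      exact_mod_cast this.le
    · exact hK2 h
  have hKR : (1:ℝ) ≤ K := by exact_mod_cast hK
  have hKα : (0:ℝ) < K + α := by linarith
  have hcp0 : 1/((K:ℝ)+α) < α := by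
    rw [div_lt_iff₀ hKα]
    rcases lt_or_eq_of_le hα1 with h | h
    · have h2 := (hK1 h).1
      rw [div_lt_iff₀ hα0] at h2
      nlinarith
    · nlinarith
  set cp := α - 1/((K:ℝ)+α) with hcpdef
  have hcp' : 0 < cp := by simp only [hcpdef]; linarith
  set cm := (1-α) - 1/((K:ℝ)+α) with hcmdef
  set A := (K:ℝ) + 2 + 1/cp + |1/cm| with hAdef
  have hA : 0 < A := by
    have h1 := one_div_pos.2 hcp'
    have h2 := abs_nonneg (1/cm)
    simp only [hAdef]; linarith
  refine ⟨A, hA, ?_⟩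
  intro f hfin x hxI hx0
  obtain ⟨hx1, hx2⟩ := hxI
  set N := (kdNorm α K δ f).toReal with hNdef
  have hN0 : 0 ≤ N := ENNReal.toReal_nonneg
  have hxabs : 0 < |x| := abs_pos.2 hx0
  have hxle1 : |x| ≤ 1 := abs_le.2 ⟨by linarith, by linarith⟩
  set n : ℕ := max K ⌈1/|x|⌉₊ with hndef
  have hKn : K ≤ n := le_max_left _ _
  have hn1 : 1 ≤ n := le_trans hK hKn
  have hnpos : (0:ℝ) < n := by exact_mod_cast hn1
  have hnx : 1/|x| ≤ (n:ℝ) := by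
    refine le_trans (Nat.le_ceil _) ?_
    exact_mod_cast le_max_right K ⌈1/|x|⌉₊
  have hnα : (0:ℝ) < (n:ℝ) + α := by linarith
  have hxn : 1/((n:ℝ)+α) ≤ |x| := by
    have h1 : 1/|x| ≤ (n:ℝ) + α := by linarith
    have := one_div_le_one_div_of_le (by positivity : (0:ℝ) < 1/|x|) h1
    rwa [one_div_one_div] at this
  have hKnα : 1/((n:ℝ)+α) ≤ 1/((K:ℝ)+α) := by
    apply one_div_le_one_div_of_le hKα
    have : (K:ℝ) ≤ n := by exact_mod_cast hKn
    linarith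
  have hnup : (n:ℝ) ≤ ((K:ℝ)+2)/|x| := by
    rw [le_div_iff₀ hxabs]
    have hinv : 1 ≤ 1/|x| := by rw [le_div_iff₀ hxabs]; linarith
    rcases le_total (K:ℕ) ⌈1/|x|⌉₊ with h | h
    · have hn' : n = ⌈1/|x|⌉₊ := max_eq_right h
      have hceil : (⌈1/|x|⌉₊:ℝ) < 1/|x| + 1 := Nat.ceil_lt_add_one (by positivity)
      have hmul : (1/|x|) * |x| = 1 := div_mul_cancel₀ 1 hxabs.ne'
      have hnr : (n:ℝ) < 1/|x| + 1 := by rw [hn']; exact hceil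
      nlinarith
    · have hn' : n = K := max_eq_left h
      rw [hn']
      nlinarith
  set Vp := eVariationOn f (Icc (1/((n:ℝ)+α)) α) with hVpdef
  set Vm := eVariationOn f (Icc (α-1) (-(1/((n:ℝ)+α)))) with hVmdef
  set IS := ∫ y in Icc (α-1) (-(1/((n:ℝ)+α))) ∪ Icc (1/((n:ℝ)+α)) α, |f y| with hISdef
  have hterm : ENNReal.ofReal ((n : ℝ) ^ (-δ)) * (Vp + Vm) + ENNReal.ofReal IS ≤
      kdNorm α K δ f :=
    le_iSup₂ (f := fun k (_ : K ≤ k) =>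
        ENNReal.ofReal ((k : ℝ) ^ (-δ)) *
          (eVariationOn f (Icc (1 / ((k:ℝ) + α)) α) +
            eVariationOn f (Icc (α - 1) (-(1 / ((k:ℝ) + α))))) +
        ENNReal.ofReal (∫ x in Icc (α - 1) (-(1 / ((k:ℝ) + α))) ∪ Icc (1 / ((k:ℝ) + α)) α, |f x|))
      n hKn
  have hr : (0:ℝ) < (n:ℝ)^(-δ) := Real.rpow_pos_of_pos hnpos _
  have hofr : ENNReal.ofReal ((n:ℝ)^(-δ)) ≠ 0 := (ENNReal.ofReal_pos.2 hr).ne'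
  have h1 : ENNReal.ofReal ((n:ℝ)^(-δ)) * (Vp + Vm) ≤ kdNorm α K δ f :=
    le_trans (self_le_add_right _ _) hterm
  have h2 : ENNReal.ofReal IS ≤ kdNorm α K δ f := le_trans le_add_self hterm
  have hVpm_ne : Vp + Vm ≠ ⊤ := by
    intro h
    rw [h, ENNReal.mul_top hofr] at h1
    exact hfin (top_le_iff.1 h1)
  have hVp_ne : Vp ≠ ⊤ := (ENNReal.add_ne_top.1 hVpm_ne).1
  have hVm_ne : Vm ≠ ⊤ := (ENNReal.add_ne_top.1 hVpm_ne).2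
  have hVtoReal : (n:ℝ)^(-δ) * (Vp.toReal + Vm.toReal) ≤ N := by
    have := ENNReal.toReal_mono hfin h1
    rwa [ENNReal.toReal_mul, ENNReal.toReal_ofReal hr.le,
      ENNReal.toReal_add hVp_ne hVm_ne] at this
  have hnd : (0:ℝ) < (n:ℝ)^δ := Real.rpow_pos_of_pos hnpos δ
  have hrpow : (n:ℝ)^(-δ) * (n:ℝ)^δ = 1 := by
    rw [← Real.rpow_add hnpos]; simp
  have hvar_bound : ∀ V' : ℝ, V' ≤ Vp.toReal + Vm.toReal → V' ≤ N * (n:ℝ)^δ := by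
    intro V' hle
    calc V' = V' * ((n:ℝ)^(-δ) * (n:ℝ)^δ) := by rw [hrpow, mul_one]
      _ = ((n:ℝ)^(-δ) * V') * (n:ℝ)^δ := by ring
      _ ≤ ((n:ℝ)^(-δ) * (Vp.toReal + Vm.toReal)) * (n:ℝ)^δ :=
          mul_le_mul_of_nonneg_right (mul_le_mul_of_nonneg_left hle hr.le) hnd.le
      _ ≤ N * (n:ℝ)^δ := mul_le_mul_of_nonneg_right hVtoReal hnd.le
  have hVpR : Vp.toReal ≤ N * (n:ℝ)^δ :=
    hvar_bound _ (le_add_of_nonneg_right ENNReal.toReal_nonneg)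
  have hVmR : Vm.toReal ≤ N * (n:ℝ)^δ :=
    hvar_bound _ (le_add_of_nonneg_left ENNReal.toReal_nonneg)
  have hISnn : 0 ≤ IS := integral_nonneg fun y => abs_nonneg _
  have hISN : IS ≤ N := by
    have := ENNReal.toReal_mono hfin h2
    rwa [ENNReal.toReal_ofReal hISnn] at this
  have hip : IntegrableOn f (Icc (1/((n:ℝ)+α)) α) := bv_integrableOn hVp_ne
  have him : IntegrableOn f (Icc (α-1) (-(1/((n:ℝ)+α)))) := bv_integrableOn hVm_ne
  have hiS : IntegrableOn (fun y => |f y|)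
      (Icc (α-1) (-(1/((n:ℝ)+α))) ∪ Icc (1/((n:ℝ)+α)) α) := (him.union hip).abs
  have hdpos : 0 < |x|^δ := Real.rpow_pos_of_pos hxabs δ
  have hdle1 : |x|^δ ≤ 1 := Real.rpow_le_one (abs_nonneg x) hxle1 hδ0.le
  have hKd : ((n:ℝ))^δ ≤ ((K:ℝ)+2)/|x|^δ := by
    calc (n:ℝ)^δ ≤ (((K:ℝ)+2)/|x|)^δ := Real.rpow_le_rpow hnpos.le hnup hδ0.le
      _ = ((K:ℝ)+2)^δ / |x|^δ := Real.div_rpow (by linarith) (abs_nonneg x) δ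
      _ ≤ ((K:ℝ)+2) / |x|^δ := by
          have h5 : ((K:ℝ)+2)^δ ≤ ((K:ℝ)+2) := by
            calc ((K:ℝ)+2)^δ ≤ ((K:ℝ)+2)^(1:ℝ) :=
                  Real.rpow_le_rpow_of_exponent_le (by linarith) hδ1.le
              _ = (K:ℝ)+2 := Real.rpow_one _
          gcongr
  have h6 : N * (n:ℝ)^δ ≤ N * (((K:ℝ)+2)/|x|^δ) := mul_le_mul_of_nonneg_left hKd hN0
  have h8 : A * N / |x|^δ =
      N*(((K:ℝ)+2)/|x|^δ) + N*((1/cp)/|x|^δ) + N*((|1/cm|)/|x|^δ) := by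
    simp only [hAdef]; field_simp
  have hdivle : ∀ c : ℝ, 0 < c → N/c ≤ N * ((1/c)/|x|^δ) := by
    intro c hc
    rw [div_eq_mul_one_div N c]
    apply mul_le_mul_of_nonneg_left _ hN0
    rw [le_div_iff₀ hdpos]
    have hcpos := one_div_pos.2 hc
    calc (1/c) * |x|^δ ≤ (1/c) * 1 := mul_le_mul_of_nonneg_left hdle1 hcpos.le
      _ = 1/c := mul_one _
  rcases hx0.lt_or_gt with hneg | hpos
  · -- x < 0
    have hα' : α < 1 := by linarith
    have hcm0 : 1/((K:ℝ)+α) < 1 - α := by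
      have h2 := (hK1 hα').2
      rw [div_lt_iff₀ (by linarith : (0:ℝ) < 1 - α)] at h2
      rw [div_lt_iff₀ hKα]
      nlinarith
    have hcm' : 0 < cm := by simp only [hcmdef]; linarith
    have hab : α - 1 < -(1/((n:ℝ)+α)) := by
      have := hKnα; linarith
    have hxmem : x ∈ Icc (α-1) (-(1/((n:ℝ)+α))) := by
      refine ⟨hx1, ?_⟩
      rw [abs_of_neg hneg] at hxn
      linarith
    have hkey := abs_le_var_add_avg hab hxmem hVm_ne
    have hJ : ∫ y in Icc (α-1) (-(1/((n:ℝ)+α))), |f y| ≤ IS :=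
      setIntegral_mono_set hiS (Filter.Eventually.of_forall fun y => abs_nonneg _)
        (subset_union_left).eventuallyLE
    have hJnn : 0 ≤ ∫ y in Icc (α-1) (-(1/((n:ℝ)+α))), |f y| :=
      integral_nonneg fun y => abs_nonneg _
    have hlen : cm ≤ -(1/((n:ℝ)+α)) - (α-1) := by
      simp only [hcmdef]; linarith [hKnα]
    have havg : (∫ y in Icc (α-1) (-(1/((n:ℝ)+α))), |f y|)/(-(1/((n:ℝ)+α)) - (α-1)) ≤ N/cm :=
      div_le_div₀ hN0 (le_trans hJ hISN) hcm' hlen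
    have hfx : |f x| ≤ N * (n:ℝ)^δ + N/cm := by linarith
    have h7 : N/cm ≤ N * ((|1/cm|)/|x|^δ) := by
      rw [abs_of_pos (one_div_pos.2 hcm')]
      exact hdivle cm hcm'
    have h9 : 0 ≤ N*((1/cp)/|x|^δ) := by
      have := one_div_pos.2 hcp'
      positivity
    rw [h8]
    linarith
  · -- 0 < x
    have hab : 1/((n:ℝ)+α) < α := lt_of_le_of_lt hKnα hcp0
    have hxmem : x ∈ Icc (1/((n:ℝ)+α)) α := by
      refine ⟨?_, hx2⟩
      rwa [abs_of_pos hpos] at hxn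
    have hkey := abs_le_var_add_avg hab hxmem hVp_ne
    have hJ : ∫ y in Icc (1/((n:ℝ)+α)) α, |f y| ≤ IS :=
      setIntegral_mono_set hiS (Filter.Eventually.of_forall fun y => abs_nonneg _)
        (subset_union_right).eventuallyLE
    have hJnn : 0 ≤ ∫ y in Icc (1/((n:ℝ)+α)) α, |f y| :=
      integral_nonneg fun y => abs_nonneg _
    have hlen : cp ≤ α - 1/((n:ℝ)+α) := by
      simp only [hcpdef]; linarith [hKnα]
    have havg : (∫ y in Icc (1/((n:ℝ)+α)) α, |f y|)/(α - 1/((n:ℝ)+α)) ≤ N/cp :=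
      div_le_div₀ hN0 (le_trans hJ hISN) hcp' hlen
    have hfx : |f x| ≤ N * (n:ℝ)^δ + N/cp := by linarith
    have h7 : N/cp ≤ N * ((1/cp)/|x|^δ) := hdivle cp hcp'
    have h9 : 0 ≤ N*((|1/cm|)/|x|^δ) := by positivity
    rw [h8]
    linarith
end

section
/- Let α ∈ (0,1), and suppose u : I_α → ℝ is such that u ∘ T_α has bounded variation on I_α. Since there are infinitely many full cylinders I_j ∈ 𝒫_1 (cylinders with T_α(I_j) = I_α), and var_{I_j}(u ∘ T_α) = var_{(α−1,α)} u for each full cylinder, it follows that u is constant almost everywhere on I_α. -/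
open Set MeasureTheory

lemma T_inv (α : ℝ) (hα0 : 0 < α) (hα1 : α < 1) (t : ℝ) (ht : t ∈ Ioo (α - 1) α)
    (n : ℕ) (hn : 1 ≤ n) : T α (1 / (t + n)) = t := by
  have hn' : (1 : ℝ) ≤ n := by exact_mod_cast hn
  have h1 : (0 : ℝ) < t + n := by have := ht.1; linarith
  have hx : 1 / (t + n) ≠ 0 := ne_of_gt (by positivity)
  rw [T, if_neg hx, abs_of_pos (by positivity), one_div_one_div]
  have hfloor : ⌊t + n + 1 - α⌋ = (n : ℤ) := by
    have heq : t + n + 1 - α = (t + 1 - α) + (n : ℝ) := by ring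
    rw [heq, Int.floor_add_natCast]
    have h0 : ⌊t + 1 - α⌋ = 0 :=
      Int.floor_eq_zero_iff.mpr ⟨by have := ht.1; linarith, by have := ht.2; linarith⟩
    simp [h0]
  rw [hfloor]
  push_cast
  ring

lemma inv_mem_Icc (α : ℝ) (hα0 : 0 < α) (hα1 : α < 1) (t : ℝ) (ht : t ∈ Ioo (α - 1) α)
    (n : ℕ) (hn : 1 / α + 1 ≤ (n : ℝ)) : 1 / (t + n) ∈ Icc (α - 1) α := by
  have hia : 0 < 1 / α := by positivity
  have h1 : (0 : ℝ) < t + n := by have := ht.1; linarith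
  constructor
  · have : 0 < 1 / (t + n) := by positivity
    linarith
  · rw [div_le_iff₀ h1]
    have h2 : 1 / α < t + n := by have := ht.1; linarith
    have h3 : α * (1 / α) = 1 := mul_one_div_cancel (ne_of_gt hα0)
    nlinarith [mul_lt_mul_of_pos_left h2 hα0]

/-- if `u ∘ T_α` has bounded variation on `I_α = [α-1, α]`, then `u` is
constant almost everywhere on `I_α` (since there are infinitely many full cylinders, each
of which contributes `var_{(α-1,α)} u` to the variation of `u ∘ T_α`). -/
theorem const_of_comp_BV (α : ℝ) (hα : α ∈ Ioo (0:ℝ) 1) (u : ℝ → ℝ)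
    (h : BoundedVariationOn (u ∘ T α) (Icc (α - 1) α)) :
    ∃ c : ℝ, ∀ᵐ x ∂(volume.restrict (Icc (α - 1) α)), u x = c := by
  obtain ⟨hα0, hα1⟩ := hα
  set c := u (α / 2) with hc
  have key : ∀ y ∈ Ioo (α - 1) α, u y = c := by
    intro y hy
    by_contra hne
    -- basic data
    have hhalf : α / 2 ∈ Ioo (α - 1) α := ⟨by linarith, by linarith⟩
    set a := min y (α / 2) with ha_def
    set b := max y (α / 2) with hb_def
    have hyne : y ≠ α / 2 := fun hyc => hne (by rw [hyc])
    have hab : a < b := min_lt_max.mpr hyne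
    have ha : a ∈ Ioo (α - 1) α := by
      rcases min_cases y (α / 2) with ⟨h1, _⟩ | ⟨h1, _⟩ <;> rw [ha_def, h1] <;> assumption
    have hb : b ∈ Ioo (α - 1) α := by
      rcases max_cases y (α / 2) with ⟨h1, _⟩ | ⟨h1, _⟩ <;> rw [hb_def, h1] <;> assumption
    have hba : b - a < 1 := by
      have := ha.1; have := hb.2; linarith
    set ε := edist (u y) c with hε_def
    have hε : ε ≠ 0 := by
      simpa [hε_def, edist_eq_zero] using hne
    have hεtop : ε ≠ ⊤ := edist_ne_top _ _
    have hεab : edist (u a) (u b) = ε := by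
      rcases min_cases y (α / 2) with ⟨h1, h2⟩ | ⟨h1, h2⟩
      · have h3 : b = α / 2 := max_eq_right h2
        rw [ha_def, h1, h3]
      · have h3 : b = y := max_eq_left h2.le
        rw [ha_def, h1, h3, edist_comm]
    -- choose N
    have hV : eVariationOn (u ∘ T α) (Icc (α - 1) α) ≠ ⊤ := h
    obtain ⟨N, hN⟩ := ENNReal.exists_nat_gt (ENNReal.div_lt_top hV hε).ne
    have hVlt : eVariationOn (u ∘ T α) (Icc (α - 1) α) < N * ε :=
      (ENNReal.div_lt_iff (Or.inl hε) (Or.inl hεtop)).mp hN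
    -- set up the sequence
    set n₀ : ℕ := ⌈1 / α⌉₊ + 2 with hn₀_def
    have hn₀ : 1 / α + 1 ≤ (n₀ : ℝ) := by
      have := Nat.le_ceil (1 / α)
      have : (1 / α : ℝ) ≤ (⌈1 / α⌉₊ : ℝ) := this
      push_cast [hn₀_def]
      linarith
    have hn₀2 : 2 ≤ n₀ := by omega
    set M : ℕ := n₀ + N with hM_def
    set sq : ℕ → ℝ := fun i => if Even i then b else a with hsq_def
    set w : ℕ → ℝ := fun i => if i < 2 * N then 1 / (sq i + (M - i / 2 : ℕ)) else α with hw_def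
    have hsq_mem : ∀ i, sq i ∈ Ioo (α - 1) α := by
      intro i
      rw [hsq_def]
      by_cases hi : Even i <;> simp [hi] <;> assumption
    have hnbig : ∀ i, i < 2 * N → 1 / α + 1 ≤ ((M - i / 2 : ℕ) : ℝ) := by
      intro i hi
      have h1 : n₀ ≤ M - i / 2 := by omega
      have : (n₀ : ℝ) ≤ ((M - i / 2 : ℕ) : ℝ) := by exact_mod_cast h1
      linarith
    have hwmem : ∀ i, w i ∈ Icc (α - 1) α := by
      intro i
      rw [hw_def]
      by_cases hi : i < 2 * N
      · simp only [hi, if_true]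
        exact inv_mem_Icc α hα0 hα1 (sq i) (hsq_mem i) (M - i / 2) (hnbig i hi)
      · simp only [hi, if_false]
        exact ⟨by linarith, le_refl α⟩
    have hmono : Monotone w := by
      apply monotone_nat_of_le_succ
      intro i
      by_cases h2 : i + 1 < 2 * N
      · have h1 : i < 2 * N := by omega
        rw [hw_def]
        simp only [h1, h2, if_true]
        rcases Nat.even_or_odd i with he | ho
        · -- i even, i = 2k
          obtain ⟨k, hk⟩ := he
          have hi2 : i / 2 = k := by omega
          have hi12 : (i + 1) / 2 = k := by omega
          have hsqi : sq i = b := by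
            have hev : Even i := ⟨k, hk⟩
            rw [hsq_def]; simp [hev]
          have hsqi1 : sq (i + 1) = a := by
            rw [hsq_def]
            have hev : Even i := ⟨k, hk⟩
            have : ¬ Even (i + 1) := by simp [Nat.even_add_one, hev]
            simp [this]
          rw [hsqi, hsqi1, hi2, hi12]
          have hge1 : 1 ≤ M - k := by omega
          have hge1' : (1 : ℝ) ≤ ((M - k : ℕ) : ℝ) := by exact_mod_cast hge1
          have hpos : 0 < a + ((M - k : ℕ) : ℝ) := by have := ha.1; linarith
          exact one_div_le_one_div_of_le hpos (by linarith [hab.le])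
        · -- i odd, i = 2k+1
          obtain ⟨k, hk⟩ := ho
          have hi2 : i / 2 = k := by omega
          have hi12 : (i + 1) / 2 = k + 1 := by omega
          have hsqi : sq i = a := by
            rw [hsq_def]
            have : ¬ Even i := by rw [hk]; simp [Nat.even_add_one, Nat.even_mul]
            simp [this]
          have hsqi1 : sq (i + 1) = b := by
            rw [hsq_def]
            have : Even (i + 1) := by rw [hk]; exact ⟨k + 1, by ring⟩
            simp [this]
          rw [hsqi, hsqi1, hi2, hi12]
          have hk1M : k + 1 ≤ M - n₀ := by omega
          have hcast : ((M - (k + 1) : ℕ) : ℝ) = ((M - k : ℕ) : ℝ) - 1 := by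
            have e1 : M - (k + 1) + 1 = M - k := by omega
            have e2 := congrArg (Nat.cast : ℕ → ℝ) e1
            push_cast at e2
            linarith
          have hge1 : n₀ ≤ M - (k + 1) := by omega
          have hge1' : (n₀ : ℝ) ≤ ((M - (k + 1) : ℕ) : ℝ) := by exact_mod_cast hge1
          have hpos : 0 < b + ((M - (k + 1) : ℕ) : ℝ) := by
            have := hb.1
            have hn2 : (2 : ℝ) ≤ (n₀ : ℝ) := by exact_mod_cast hn₀2
            linarith
          apply one_div_le_one_div_of_le hpos
          rw [hcast]
          linarith
      · by_cases h1 : i < 2 * N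
        · -- i = 2N - 1 : w i ≤ α = w (i+1)
          have hw1 : w (i + 1) = α := by rw [hw_def]; simp [h2]
          rw [hw1]
          exact (hwmem i).2
        · have hwi : w i = α := by rw [hw_def]; simp [h1]
          have hwi1 : w (i + 1) = α := by rw [hw_def]; simp [show ¬ (i + 1 < 2 * N) by omega]
          rw [hwi, hwi1]
    -- each even-indexed increment contributes ε
    have hterm : ∀ k, k < N →
        edist ((u ∘ T α) (w (2 * k + 1))) ((u ∘ T α) (w (2 * k))) = ε := by
      intro k hk
      have h1 : 2 * k < 2 * N := by omega
      have h2 : 2 * k + 1 < 2 * N := by omega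
      have hd1 : (2 * k) / 2 = k := by omega
      have hd2 : (2 * k + 1) / 2 = k := by omega
      have hsq1 : sq (2 * k) = b := by
        have hev : Even (2 * k) := ⟨k, by ring⟩
        rw [hsq_def]; simp [hev]
      have hsq2 : sq (2 * k + 1) = a := by
        rw [hsq_def]
        have : ¬ Even (2 * k + 1) := by simp [Nat.even_add_one, Nat.even_mul]
        simp [this]
      have e1 : w (2 * k) = 1 / (b + ((M - k : ℕ) : ℝ)) := by
        rw [hw_def]; simp only [h1, if_true, hd1, hsq1]
      have e2 : w (2 * k + 1) = 1 / (a + ((M - k : ℕ) : ℝ)) := by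
        rw [hw_def]; simp only [h2, if_true, hd2, hsq2]
      have hge1 : 1 ≤ M - k := by omega
      rw [e1, e2]
      show edist (u (T α (1 / (a + ((M - k : ℕ) : ℝ)))))
          (u (T α (1 / (b + ((M - k : ℕ) : ℝ))))) = ε
      rw [T_inv α hα0 hα1 a ha (M - k) hge1, T_inv α hα0 hα1 b hb (M - k) hge1]
      exact hεab
    -- sum up
    have hsum := eVariationOn.sum_le (f := u ∘ T α) (n := 2 * N) hmono hwmem
    have hNε : (N : ENNReal) * ε ≤ eVariationOn (u ∘ T α) (Icc (α - 1) α) := by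
      have step1 : (N : ENNReal) * ε
          = ∑ k ∈ Finset.range N, edist ((u ∘ T α) (w (2 * k + 1))) ((u ∘ T α) (w (2 * k))) := by
        rw [Finset.sum_congr rfl (fun k hk => hterm k (Finset.mem_range.mp hk))]
        simp [Finset.sum_const, nsmul_eq_mul]
      have step2 : ∑ k ∈ Finset.range N, edist ((u ∘ T α) (w (2 * k + 1))) ((u ∘ T α) (w (2 * k)))
          ≤ ∑ i ∈ Finset.range (2 * N), edist ((u ∘ T α) (w (i + 1))) ((u ∘ T α) (w i)) := by
        have himg : ∑ k ∈ Finset.range N,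
            edist ((u ∘ T α) (w (2 * k + 1))) ((u ∘ T α) (w (2 * k)))
            = ∑ i ∈ (Finset.range N).image (fun k => 2 * k),
              edist ((u ∘ T α) (w (i + 1))) ((u ∘ T α) (w i)) := by
          rw [Finset.sum_image (fun x _ y _ hxy => by omega)]
        rw [himg]
        apply Finset.sum_le_sum_of_subset
        intro i hi
        simp only [Finset.mem_image, Finset.mem_range] at hi ⊢
        obtain ⟨k, hk, rfl⟩ := hi
        omega
      calc (N : ENNReal) * ε = _ := step1
        _ ≤ _ := step2
        _ ≤ _ := hsum
    exact absurd hNε (not_le.mpr hVlt)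
  refine ⟨c, ?_⟩
  rw [ae_iff]
  have hsub : {x | ¬ u x = c} ⊆ (Ioo (α - 1) α)ᶜ := fun x hx hx' => hx (key x hx')
  refine measure_mono_null hsub ?_
  rw [Measure.restrict_apply measurableSet_Ioo.compl]
  have hsub2 : (Ioo (α - 1) α)ᶜ ∩ Icc (α - 1) α ⊆ {α - 1} ∪ {α} := by
    intro x ⟨hx1, hx2⟩
    simp only [mem_compl_iff, mem_Ioo, not_and_or, not_lt] at hx1
    rcases hx1 with h1 | h1
    · left; exact le_antisymm h1 hx2.1 ▸ rfl
    · right; exact (le_antisymm hx2.2 h1).symm ▸ rfl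
  refine measure_mono_null hsub2 ?_
  exact measure_union_null (by simp) (by simp)
end
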